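/- arXiv:2003.11757 — 5 statements merged into one kernel-verified Lean document; each statement's English description precedes it below -/
import Mathlib

section
/- Every non-zero element x of the braid monoid with zero 𝔹ₙ can be written as a product x = β_{1,q₁} · β_{2,q₂} · ⋯ · β_{n−1,q_{n−1}} with 1 ≤ q_p ≤ p+1 for each 1 ≤ p ≤ n−1, and the tuple (q₁,…,q_{n−1}) satisfying these bounds is uniquely determined by x. -/
/-!
The braid monoid with zero `𝔹ₙ`, realized as the quotient of the free monoid on
letters `β₁, …, β_{n−1}, z` by the congruence generated by the braid relations,
`β_p β_p = 0`, `β_p z = z = z β_p` and `z z = z`, with `0 := z`.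

Statement 0: every non-zero element `x ∈ 𝔹ₙ` can be written as
`x = β_{1,q₁} ⋯ β_{n−1, q_{n−1}}` with `1 ≤ q_p ≤ p + 1`, and the tuple
`(q₁, …, q_{n−1})` satisfying these bounds is uniquely determined by `x`.
-/

namespace BraidMonoidZero

/-- Letters: `some i` is the generator `β_{i+1}` (for `i : Fin (n-1)`), `none` is `z`. -/
abbrev Letter (n : ℕ) := Option (Fin (n - 1))

/-- The defining relations of the braid monoid with zero. -/
inductive Rel (n : ℕ) : FreeMonoid (Letter n) → FreeMonoid (Letter n) → Prop
  | comm (i j : Fin (n - 1)) (h : i.val + 1 < j.val) :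
      Rel n (FreeMonoid.of (some j) * FreeMonoid.of (some i))
            (FreeMonoid.of (some i) * FreeMonoid.of (some j))
  | braid (i j : Fin (n - 1)) (h : j.val = i.val + 1) :
      Rel n (FreeMonoid.of (some j) * FreeMonoid.of (some i) * FreeMonoid.of (some j))
            (FreeMonoid.of (some i) * FreeMonoid.of (some j) * FreeMonoid.of (some i))
  | square (i : Fin (n - 1)) :
      Rel n (FreeMonoid.of (some i) * FreeMonoid.of (some i)) (FreeMonoid.of none)
  | zright (i : Fin (n - 1)) :
      Rel n (FreeMonoid.of (some i) * FreeMonoid.of none) (FreeMonoid.of none)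
  | zleft (i : Fin (n - 1)) :
      Rel n (FreeMonoid.of none * FreeMonoid.of (some i)) (FreeMonoid.of none)
  | zz : Rel n (FreeMonoid.of none * FreeMonoid.of none) (FreeMonoid.of none)

/-- The congruence generated by the defining relations. -/
def bmzCon (n : ℕ) : Con (FreeMonoid (Letter n)) := conGen (Rel n)

/-- The braid monoid with zero `𝔹ₙ`. -/
abbrev BMZ (n : ℕ) := (bmzCon n).Quotient

/-- The zero element `0 = z` of `𝔹ₙ`. -/
def zero (n : ℕ) : BMZ n := (bmzCon n).mk' (FreeMonoid.of none)

/-- The generator `β_{i+1}` of `𝔹ₙ` (so subscripts range over `1, …, n-1`). -/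
def gen (n : ℕ) (i : Fin (n - 1)) : BMZ n := (bmzCon n).mk' (FreeMonoid.of (some i))

/-- The generator `β_r`, indexed by its 1-based subscript `r ∈ {1, …, n-1}`. -/
def genNat (n r : ℕ) : BMZ n := if h : r - 1 < n - 1 then gen n ⟨r - 1, h⟩ else 1

/-- `betaSeg n p q` is `β_{p,q} = β_p β_{p-1} ⋯ β_q` (the identity when `q = p + 1`). -/
def betaSeg (n p q : ℕ) : BMZ n :=
  ((List.range' q (p + 1 - q)).reverse.map (genNat n)).prod

/-- The product `β_{1,q₁} · β_{2,q₂} · ⋯ · β_{n−1,q_{n−1}}`, where the value `q i`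
corresponds to `q_{i+1}` for `i : Fin (n-1)`. -/
def normalProd (n : ℕ) (q : Fin (n - 1) → ℕ) : BMZ n :=
  ((List.finRange (n - 1)).map (fun i => betaSeg n (i.val + 1) (q i))).prod

variable {n : ℕ}

/-! ### Basic relations in `BMZ` -/

variable {n : ℕ}

def mk (w : FreeMonoid (Letter n)) : BMZ n := (bmzCon n).mk' w

lemma mk_rel {u v : FreeMonoid (Letter n)} (h : Rel n u v) : mk u = mk v :=
  Con.eq _ |>.mpr (ConGen.Rel.of _ _ h)

lemma mk_mul (u v : FreeMonoid (Letter n)) : mk (u * v) = mk u * mk v := map_mul _ _ _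

lemma gen_comm {i j : Fin (n-1)} (h : i.val + 1 < j.val) :
    gen n j * gen n i = gen n i * gen n j := by
  have := mk_rel (Rel.comm i j h)
  simpa [mk, mk_mul, gen] using this

lemma gen_braid {i j : Fin (n-1)} (h : j.val = i.val + 1) :
    gen n j * gen n i * gen n j = gen n i * gen n j * gen n i := by
  have := mk_rel (Rel.braid i j h)
  simpa [mk, mk_mul, gen] using this

lemma gen_square (i : Fin (n-1)) : gen n i * gen n i = zero n := by
  have := mk_rel (Rel.square i)
  simpa [mk, mk_mul, gen, zero] using this

lemma gen_zero (i : Fin (n-1)) : gen n i * zero n = zero n := by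
  have := mk_rel (Rel.zright i)
  simpa [mk, mk_mul, gen, zero] using this

lemma zero_gen (i : Fin (n-1)) : zero n * gen n i = zero n := by
  have := mk_rel (Rel.zleft i)
  simpa [mk, mk_mul, gen, zero] using this

lemma zero_zero : zero n * zero n = zero n := by
  have := mk_rel (Rel.zz (n := n))
  simpa [mk, mk_mul, zero] using this

/-- value of `mk` on a single letter -/
def gen' (a : Letter n) : BMZ n := mk (FreeMonoid.of a)

lemma gen'_some (i : Fin (n-1)) : gen' (some i) = gen n i := rfl
lemma gen'_none : gen' (none : Letter n) = zero n := rfl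

lemma gen'_zero (a : Letter n) : gen' a * zero n = zero n := by
  cases a with
  | none => exact zero_zero
  | some i => exact gen_zero i

lemma zero_gen' (a : Letter n) : zero n * gen' a = zero n := by
  cases a with
  | none => exact zero_zero
  | some i => exact zero_gen i

lemma mk_ofList_append (u v : List (Letter n)) :
    mk (FreeMonoid.ofList (u ++ v)) = mk (FreeMonoid.ofList u) * mk (FreeMonoid.ofList v) := by
  rw [← mk_mul]; rfl

lemma mul_zero' (x : BMZ n) : x * zero n = zero n := by
  obtain ⟨w, rfl⟩ := Con.mk'_surjective x
  change mk w * zero n = zero n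
  induction w using FreeMonoid.recOn with
  | one => rw [show mk (1 : FreeMonoid (Letter n)) = 1 from map_one _, one_mul]
  | of_mul a w ih =>
    rw [mk_mul, mul_assoc, ih]
    exact gen'_zero a

lemma zero_mul' (x : BMZ n) : zero n * x = zero n := by
  obtain ⟨w, rfl⟩ := Con.mk'_surjective x
  change zero n * mk w = zero n
  induction w using FreeMonoid.recOn with
  | one => rw [show mk (1 : FreeMonoid (Letter n)) = 1 from map_one _, mul_one]
  | of_mul a w ih =>
    have h1 : zero n * mk (FreeMonoid.of a) = zero n := zero_gen' a
    rw [mk_mul, ← mul_assoc, h1, ih]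


/-! ### Segment lemmas -/

lemma betaSeg_empty (p q : ℕ) (h : p + 1 ≤ q) : betaSeg n p q = 1 := by
  unfold betaSeg
  rw [show p + 1 - q = 0 by omega]
  simp

lemma betaSeg_cons_right (p q : ℕ) (h : q ≤ p) :
    betaSeg n p q = betaSeg n p (q + 1) * genNat n q := by
  unfold betaSeg
  rw [show p + 1 - q = (p + 1 - (q+1)) + 1 by omega, List.range'_succ]
  simp [List.prod_append]

lemma betaSeg_cons_left (p q : ℕ) (hq : 1 ≤ q) (h : q ≤ p) :
    betaSeg n p q = genNat n p * betaSeg n (p - 1) q := by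
  unfold betaSeg
  rw [show p + 1 - q = (p - q) + 1 by omega, List.range'_concat,
    show q + 1 * (p - q) = p by omega, show p - 1 + 1 - q = p - q by omega]
  simp

lemma betaSeg_split (p q m : ℕ) (h1 : q ≤ m + 1) (h2 : m ≤ p) :
    betaSeg n p q = betaSeg n p (m + 1) * betaSeg n m q := by
  have hl : List.range' q (m + 1 - q) ++ List.range' (m + 1) (p - m) = List.range' q (p + 1 - q) := by
    have h := List.range'_append (s := q) (m := m + 1 - q) (n := p - m) (step := 1)
    simp only [one_mul] at h
    rw [show q + (m + 1 - q) = m + 1 by omega] at h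
    rw [h]
    congr 1
    omega
  unfold betaSeg
  rw [show p + 1 - (m + 1) = p - m by omega, ← hl]
  simp [List.prod_append]

lemma genNat_comm (a b : ℕ) (h1 : 1 ≤ a) (h2 : a + 1 < b) (h3 : b ≤ n - 1) :
    genNat n b * genNat n a = genNat n a * genNat n b := by
  have ha : a - 1 < n - 1 := by omega
  have hb : b - 1 < n - 1 := by omega
  rw [genNat, genNat, dif_pos ha, dif_pos hb]
  exact gen_comm (by simp; omega)

lemma betaSeg_comm_genNat (p q r : ℕ)
    (h : ∀ m, q ≤ m → m ≤ p → genNat n m * genNat n r = genNat n r * genNat n m) :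
    betaSeg n p q * genNat n r = genNat n r * betaSeg n p q := by
  unfold betaSeg
  generalize hl : (List.range' q (p + 1 - q)).reverse = l
  have hmem : ∀ m ∈ l, genNat n m * genNat n r = genNat n r * genNat n m := by
    intro m hm
    rw [← hl, List.mem_reverse, List.mem_range'_1] at hm
    exact h m hm.1 (by omega)
  clear hl
  induction l with
  | nil => simp
  | cons a t ih =>
    simp only [List.map_cons, List.prod_cons, mul_assoc]
    rw [ih (fun m hm => hmem m (List.mem_cons_of_mem _ hm)), ← mul_assoc,
      hmem a List.mem_cons_self, mul_assoc]

lemma betaSeg_comm_low (p q r : ℕ) (hr : 1 ≤ r) (hrq : r + 1 < q) (hp : p ≤ n - 1) :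
    betaSeg n p q * genNat n r = genNat n r * betaSeg n p q :=
  betaSeg_comm_genNat p q r fun m hm hm' => genNat_comm r m hr (by omega) (by omega)

lemma betaSeg_comm_high (p q r : ℕ) (hq : 1 ≤ q) (hpr : p + 1 < r) (hr : r ≤ n - 1) :
    betaSeg n p q * genNat n r = genNat n r * betaSeg n p q :=
  betaSeg_comm_genNat p q r fun m hm hm' => (genNat_comm m r (by omega) (by omega) hr).symm

/-- Insertion case A: extend the segment. -/
lemma betaSeg_extend (p q : ℕ) (hq : 2 ≤ q) (hqp : q ≤ p + 1) :
    betaSeg n p q * genNat n (q - 1) = betaSeg n p (q - 1) := by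
  rw [betaSeg_cons_right p (q-1) (by omega), show q - 1 + 1 = q by omega]

/-- Insertion case C: hitting a square gives zero. -/
lemma betaSeg_kill (p q : ℕ) (hq : 1 ≤ q) (hqp : q ≤ p) (hp : p ≤ n - 1) :
    betaSeg n p q * genNat n q = zero n := by
  rw [betaSeg_cons_right p q hqp, mul_assoc]
  have hq' : q - 1 < n - 1 := by omega
  rw [genNat, dif_pos hq', gen_square, mul_zero']

/-- Insertion case D: braid exchange. -/
lemma betaSeg_exchange (p q r : ℕ) (hq : 1 ≤ q) (hqr : q < r) (hrp : r ≤ p) (hp : p ≤ n - 1) :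
    betaSeg n p q * genNat n r = genNat n (r - 1) * betaSeg n p q := by
  have h2r : 2 ≤ r := by omega
  set A := betaSeg n p (r + 1) with hA
  set C := betaSeg n (r - 2) q with hC
  set a := genNat n r with ha
  set b := genNat n (r - 1) with hb
  have hsplit : betaSeg n p q = A * (a * (b * C)) := by
    rw [hA, ha, hb, hC, betaSeg_split p q r (by omega) hrp,
      betaSeg_cons_left r q hq (by omega),
      betaSeg_cons_left (r - 1) q hq (by omega),
      show r - 1 - 1 = r - 2 by omega]
  have hcommC : C * a = a * C := by
    rw [hC, ha]
    refine betaSeg_comm_genNat (r - 2) q r ?_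
    intro m hm hm'
    have h1 : 1 ≤ m := by omega
    have h2 : m + 1 < r := by omega
    have h3 : r ≤ n - 1 := by omega
    exact (genNat_comm m r h1 h2 h3).symm
  have hcommA : A * b = b * A := by
    rw [hA, hb]
    exact betaSeg_comm_low p (r + 1) (r - 1) (by omega) (by omega) hp
  have hbraid : a * (b * a) = b * (a * b) := by
    have h1 : r - 1 - 1 < n - 1 := by omega
    have h2 : r - 1 < n - 1 := by omega
    rw [ha, hb, genNat, genNat, dif_pos h1, dif_pos h2, ← mul_assoc, ← mul_assoc]
    exact gen_braid (by simp; omega)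
  calc betaSeg n p q * a = A * (a * (b * (C * a))) := by rw [hsplit]; simp [mul_assoc]
    _ = A * (a * (b * (a * C))) := by rw [hcommC]
    _ = A * ((a * (b * a)) * C) := by simp [mul_assoc]
    _ = A * ((b * (a * b)) * C) := by rw [hbraid]
    _ = (A * b) * (a * (b * C)) := by simp [mul_assoc]
    _ = b * (A * (a * (b * C))) := by rw [hcommA]; simp [mul_assoc]
    _ = b * betaSeg n p q := by rw [← hsplit]


/-! ### Normal form lists and insertion -/

/-- `Valid p t` : `t` is the list `[q_p, q_{p-1}, …, q_1]` of segment parameters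
(top index first), with `1 ≤ q_j ≤ j + 1`. -/
inductive Valid : ℕ → List ℕ → Prop
  | nil : Valid 0 []
  | cons (q p : ℕ) (t : List ℕ) (hq1 : 1 ≤ q) (hq2 : q ≤ p + 2) (h : Valid p t) :
      Valid (p + 1) (q :: t)

/-- The product `β_{1,q₁} ⋯ β_{p,q_p}` encoded by a valid list (top index first). -/
def prodR (n : ℕ) : List ℕ → ℕ → BMZ n
  | [], _ => 1
  | q :: t, p => prodR n t (p - 1) * betaSeg n p q

/-- Right insertion of the letter `β_r` into a normal-form list. -/
def insR : List ℕ → ℕ → Option (List ℕ)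
  | [], _ => none
  | q :: t, r =>
    if r + 1 = q then some (r :: t)
    else if r = q then none
    else if r < q then (insR t r).map (q :: ·)
    else (insR t (r - 1)).map (q :: ·)

lemma insR_valid {t : List ℕ} {p r : ℕ} (hv : Valid p t) (hr : 1 ≤ r) {t' : List ℕ}
    (h : insR t r = some t') : Valid p t' := by
  induction hv generalizing r t' with
  | nil => simp [insR] at h
  | cons q p t hq1 hq2 hvt ih =>
    rw [insR] at h
    split_ifs at h with h1 h2 h3
    · obtain rfl : r :: t = t' := by simpa using h
      exact Valid.cons r p t hr (by omega) hvt
    · cases (Option.map_eq_some_iff.mp h) with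
      | intro u hu => exact hu.2 ▸ Valid.cons q p u hq1 hq2 (ih hr hu.1)
    · cases (Option.map_eq_some_iff.mp h) with
      | intro u hu => exact hu.2 ▸ Valid.cons q p u hq1 hq2 (ih (by omega) hu.1)

lemma valid_length {t : List ℕ} {p : ℕ} (hv : Valid p t) : t.length = p := by
  induction hv with
  | nil => rfl
  | cons q p t _ _ _ ih => simp [ih]

/-- Key engine: multiplying a normal form by a generator performs right insertion. -/
lemma prodR_mul_genNat {t : List ℕ} {p r : ℕ} (hv : Valid p t) (hp : p ≤ n - 1)
    (hr1 : 1 ≤ r) (hrp : r ≤ p) :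
    prodR n t p * genNat n r = (insR t r).elim (zero n) (fun t' => prodR n t' p) := by
  induction hv generalizing r with
  | nil => omega
  | cons q p t hq1 hq2 hvt ih =>
    rw [insR, prodR]
    simp only [Nat.add_sub_cancel]
    split_ifs with h1 h2 h3
    · -- extend the segment
      rw [Option.elim_some, prodR, Nat.add_sub_cancel, mul_assoc,
        show r = q - 1 by omega, betaSeg_extend (p + 1) q (by omega) (by omega)]
    · -- kill
      subst h2
      rw [mul_assoc, betaSeg_kill (p + 1) r hr1 (by omega) hp, mul_zero']
      rfl
    · -- commute down with the same letter
      have hcomm : betaSeg n (p + 1) q * genNat n r = genNat n r * betaSeg n (p + 1) q :=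
        betaSeg_comm_low (p + 1) q r hr1 (by omega) hp
      rw [mul_assoc, hcomm, ← mul_assoc, ih (by omega) hr1 (by omega)]
      cases hins : insR t r with
      | none => simp [hins, zero_mul']
      | some u => simp [hins, prodR, Nat.add_sub_cancel]
    · -- exchange
      have hqr : q < r := by omega
      have hcomm : betaSeg n (p + 1) q * genNat n r = genNat n (r - 1) * betaSeg n (p + 1) q :=
        betaSeg_exchange (p + 1) q r hq1 hqr (by omega) hp
      rw [mul_assoc, hcomm, ← mul_assoc, ih (by omega) (by omega) (by omega)]
      cases hins : insR t (r - 1) with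
      | none => simp [hins, zero_mul']
      | some u => simp [hins, prodR, Nat.add_sub_cancel]

/-- The identity normal-form list `[p+1, p, …, 2]` (all segments empty). -/
def idList : ℕ → List ℕ
  | 0 => []
  | p + 1 => (p + 2) :: idList p

lemma idList_valid (p : ℕ) : Valid p (idList p) := by
  induction p with
  | zero => exact Valid.nil
  | succ p ih => exact Valid.cons _ _ _ (by omega) le_rfl ih

lemma prodR_idList (p : ℕ) : prodR n (idList p) p = 1 := by
  induction p with
  | zero => rfl
  | succ p ih =>
    rw [idList, prodR, Nat.add_sub_cancel, ih, betaSeg_empty _ _ (by omega), one_mul]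

lemma genNat_of_fin (i : Fin (n - 1)) : genNat n (i.val + 1) = gen n i := by
  have h : i.val + 1 - 1 < n - 1 := by have := i.isLt; omega
  have he : (⟨i.val + 1 - 1, h⟩ : Fin (n - 1)) = i := Fin.ext (by simp)
  rw [genNat, dif_pos h, he]

/-- Every word is either zero or a normal form. -/
lemma mk_eq_zero_or_nf (w : FreeMonoid (Letter n)) :
    mk w = zero n ∨ ∃ t, Valid (n - 1) t ∧ mk w = prodR n t (n - 1) := by
  have key : ∀ l : List (Letter n), mk (FreeMonoid.ofList l) = zero n ∨
      ∃ t, Valid (n - 1) t ∧ mk (FreeMonoid.ofList l) = prodR n t (n - 1) := by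
    intro l
    induction l using List.reverseRecOn with
    | nil =>
      right
      refine ⟨idList (n - 1), idList_valid _, ?_⟩
      rw [prodR_idList]
      exact map_one _
    | append_singleton l a ih =>
      rw [mk_ofList_append]
      have hsingle : mk (FreeMonoid.ofList [a]) = gen' a := rfl
      rw [hsingle]
      rcases ih with hz | ⟨t, hv, heq⟩
      · left; rw [hz, zero_gen']
      · cases a with
        | none => left; rw [heq, gen'_none, mul_zero']
        | some i =>
          rw [heq, gen'_some, ← genNat_of_fin i]
          have hkey := prodR_mul_genNat (n := n) (r := i.val + 1) hv le_rfl (by omega)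
            (by have := i.isLt; omega)
          cases hins : insR t (i.val + 1) with
          | none => left; rw [hkey, hins, Option.elim_none]
          | some t' =>
            right
            exact ⟨t', insR_valid hv (by omega) hins, by rw [hkey, hins, Option.elim_some]⟩
  exact key w.toList


/-! ### The permutation model -/

def posA (i : Fin (n - 1)) : Fin n := ⟨i.val, by have := i.isLt; omega⟩
def posB (i : Fin (n - 1)) : Fin n := ⟨i.val + 1, by have := i.isLt; omega⟩

/-- Number of inversions of a permutation. -/
def invLen (σ : Equiv.Perm (Fin n)) : ℕ :=
  (Finset.univ.filter (fun p : Fin n × Fin n => p.1 < p.2 ∧ σ p.2 < σ p.1)).card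

lemma swap_lt {a b x y : Fin n} (hab : (a : ℕ) + 1 = b) (hxy : x < y)
    (hne : ¬(x = a ∧ y = b)) : Equiv.swap a b x < Equiv.swap a b y := by
  have hne' : ¬(x.val = a.val ∧ y.val = b.val) := by
    simpa [Fin.ext_iff] using hne
  rw [Fin.lt_def] at hxy ⊢
  simp only [Equiv.swap_apply_def, Fin.ext_iff]
  split_ifs <;> omega

lemma invLen_mul_swap (σ : Equiv.Perm (Fin n)) {a b : Fin n} (hab : (a : ℕ) + 1 = b)
    (h : σ a < σ b) : invLen (σ * Equiv.swap a b) = invLen σ + 1 := by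
  classical
  set s := Equiv.swap a b with hs
  have hsa : s a = b := Equiv.swap_apply_left a b
  have hsb : s b = a := Equiv.swap_apply_right a b
  have hss : ∀ x, s (s x) = x := fun x => Equiv.swap_apply_self a b x
  have hltab : a < b := by rw [Fin.lt_def]; omega
  have hset : (Finset.univ.filter
        (fun p : Fin n × Fin n => p.1 < p.2 ∧ (σ * s) p.2 < (σ * s) p.1))
      = insert (a, b) ((Finset.univ.filter
          (fun p : Fin n × Fin n => p.1 < p.2 ∧ σ p.2 < σ p.1)).image
          (fun p => (s p.1, s p.2))) := by
    ext ⟨x, y⟩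
    simp only [Finset.mem_filter, Finset.mem_insert, Finset.mem_image, Finset.mem_univ,
      true_and, Prod.mk.injEq, Prod.exists]
    simp only [Equiv.Perm.mul_apply]
    constructor
    · rintro ⟨hxy, hinv⟩
      by_cases hc : x = a ∧ y = b
      · exact Or.inl hc
      · exact Or.inr ⟨s x, s y, ⟨swap_lt hab hxy hc, hinv⟩, hss x, hss y⟩
    · rintro (⟨rfl, rfl⟩ | ⟨u, v, ⟨huv, hinvuv⟩, hux, hvy⟩)
      · exact ⟨hltab, by rwa [hsb, hsa]⟩
      · subst hux; subst hvy
        have hne : ¬(u = a ∧ v = b) := by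
          rintro ⟨rfl, rfl⟩
          exact absurd hinvuv (not_lt.mpr h.le)
        refine ⟨swap_lt hab huv hne, ?_⟩
        rwa [hss u, hss v]
  have hinj : Function.Injective (fun p : Fin n × Fin n => (s p.1, s p.2)) := by
    rintro ⟨u, v⟩ ⟨u', v'⟩ hp
    simp only [Prod.mk.injEq] at hp
    exact Prod.ext (s.injective hp.1) (s.injective hp.2)
  have hnotmem : (a, b) ∉ (Finset.univ.filter
      (fun p : Fin n × Fin n => p.1 < p.2 ∧ σ p.2 < σ p.1)).image (fun p => (s p.1, s p.2)) := by
    simp only [Finset.mem_image, Finset.mem_filter, Finset.mem_univ, true_and, Prod.mk.injEq,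
      Prod.exists, not_exists]
    rintro u v ⟨⟨huv, _⟩, hua, hvb⟩
    have hu : u = b := by rw [← hss u, hua, hsa]
    have hv : v = a := by rw [← hss v, hvb, hsb]
    rw [hu, hv] at huv
    exact absurd huv (not_lt.mpr hltab.le)
  rw [invLen, invLen, hset, Finset.card_insert_of_notMem hnotmem,
    Finset.card_image_of_injective _ hinj]

lemma invLen_swap_cases (σ : Equiv.Perm (Fin n)) {a b : Fin n} (hab : (a : ℕ) + 1 = b) :
    (σ a < σ b ∧ invLen (σ * Equiv.swap a b) = invLen σ + 1)
    ∨ (σ b < σ a ∧ invLen σ = invLen (σ * Equiv.swap a b) + 1) := by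
  have hab' : a ≠ b := by intro hh; rw [hh] at hab; omega
  rcases lt_trichotomy (σ a) (σ b) with hlt | heq | hgt
  · exact Or.inl ⟨hlt, invLen_mul_swap σ hab hlt⟩
  · exact absurd (σ.injective heq) hab'
  · refine Or.inr ⟨hgt, ?_⟩
    have h2 := invLen_mul_swap (σ * Equiv.swap a b) hab
      (by rw [Equiv.Perm.mul_apply, Equiv.Perm.mul_apply, Equiv.swap_apply_left,
        Equiv.swap_apply_right]; exact hgt)
    rwa [mul_assoc, Equiv.swap_mul_self, mul_one] at h2


/-! ### Step action -/

@[simp] lemma posA_val (i : Fin (n - 1)) : (posA (n := n) i).val = i.val := rfl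
@[simp] lemma posB_val (i : Fin (n - 1)) : (posB (n := n) i).val = i.val + 1 := rfl

def swp (i : Fin (n - 1)) : Equiv.Perm (Fin n) := Equiv.swap (posA i) (posB i)

lemma posAB (i : Fin (n - 1)) : ((posA i : Fin n) : ℕ) + 1 = (posB i : Fin n) := rfl

def stepi (i : Fin (n - 1)) : Option (Equiv.Perm (Fin n)) → Option (Equiv.Perm (Fin n)) :=
  fun st => st.bind fun σ => if σ (posA i) < σ (posB i) then some (σ * swp i) else none

lemma stepi_none (i : Fin (n - 1)) : stepi i none = none := rfl

lemma stepi_some (i : Fin (n - 1)) (σ : Equiv.Perm (Fin n)) :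
    stepi i (some σ) = if σ (posA i) < σ (posB i) then some (σ * swp i) else none := rfl

def wAct (l : List (Fin (n - 1))) (st : Option (Equiv.Perm (Fin n))) :
    Option (Equiv.Perm (Fin n)) := l.foldl (fun s i => stepi i s) st

def wprod (l : List (Fin (n - 1))) : Equiv.Perm (Fin n) := (l.map (swp)).prod

lemma invLen_mul_swp_le (σ : Equiv.Perm (Fin n)) (i : Fin (n - 1)) :
    invLen (σ * swp i) ≤ invLen σ + 1 := by
  rcases invLen_swap_cases σ (posAB i) with ⟨_, h⟩ | ⟨_, h⟩ <;> rw [swp] <;> omega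

lemma invLen_mul_wprod_le (l : List (Fin (n - 1))) (σ : Equiv.Perm (Fin n)) :
    invLen (σ * wprod l) ≤ invLen σ + l.length := by
  induction l generalizing σ with
  | nil => simp [wprod]
  | cons i l ih =>
    have h1 : σ * wprod (i :: l) = (σ * swp i) * wprod l := by
      simp [wprod, mul_assoc]
    rw [h1]
    calc invLen ((σ * swp i) * wprod l) ≤ invLen (σ * swp i) + l.length := ih _
      _ ≤ invLen σ + 1 + l.length := by have := invLen_mul_swp_le σ i; omega
      _ = invLen σ + (i :: l).length := by simp; omega

lemma wAct_none (l : List (Fin (n - 1))) : wAct l none = none := by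
  induction l with
  | nil => rfl
  | cons i l ih => exact ih

lemma wAct_some (l : List (Fin (n - 1))) (σ : Equiv.Perm (Fin n)) :
    wAct l (some σ) = if invLen (σ * wprod l) = invLen σ + l.length
      then some (σ * wprod l) else none := by
  induction l generalizing σ with
  | nil => simp [wAct, wprod]
  | cons i l ih =>
    have hw : σ * wprod (i :: l) = (σ * swp i) * wprod l := by simp [wprod, mul_assoc]
    have hfold : wAct (i :: l) (some σ) = wAct l (stepi i (some σ)) := rfl
    rcases invLen_swap_cases σ (posAB i) with ⟨h1, h2⟩ | ⟨h1, h2⟩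
    · rw [hfold, stepi_some, if_pos h1, ih]
      rw [← swp] at h2
      rw [hw, List.length_cons, h2,
        show invLen σ + 1 + l.length = invLen σ + (l.length + 1) from by omega]
    · rw [hfold, stepi_some, if_neg (not_lt.mpr h1.le)]
      have hb := invLen_mul_wprod_le l (σ * swp i)
      rw [← swp] at h2
      rw [wAct_none, if_neg]
      rw [hw, List.length_cons]
      omega

/-! ### Swap identities -/

lemma swap_comm_gen {a b c d : Fin n} (hab : (a : ℕ) + 1 = b) (hcd : (c : ℕ) + 1 = d)
    (hbc : (b : ℕ) < c) :
    Equiv.swap c d * Equiv.swap a b = Equiv.swap a b * Equiv.swap c d := by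
  ext x
  simp only [Equiv.Perm.mul_apply, Equiv.swap_apply_def, Fin.ext_iff]
  split_ifs <;> first | rfl | omega | (simp only [Fin.ext_iff, Fin.lt_def] at *; omega)

lemma swp_comm {i j : Fin (n - 1)} (h : i.val + 1 < j.val) :
    swp j * swp i = swp i * swp j := by
  rw [swp, swp]
  exact swap_comm_gen (by simp) (by simp) (by simp; omega)

lemma swp_braid {i j : Fin (n - 1)} (h : j.val = i.val + 1) :
    swp j * (swp i * swp j) = swp i * (swp j * swp i) := by
  have hi := i.isLt
  have hj := j.isLt
  have hposA : posA j = posB i := by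
    apply Fin.ext
    rw [posA_val, posB_val, h]
  have hAB : posA i ≠ posB i := Fin.ne_of_val_ne (by rw [posA_val, posB_val]; omega)
  have hAC : posA i ≠ posB j := Fin.ne_of_val_ne (by rw [posA_val, posB_val]; omega)
  have hCB : posB j ≠ posB i := Fin.ne_of_val_ne (by rw [posB_val, posB_val]; omega)
  have h1 := Equiv.swap_mul_swap_mul_swap hAB hAC
  have h2 := Equiv.swap_mul_swap_mul_swap hCB (Ne.symm hAC)
  rw [Equiv.swap_comm (posB i) (posA i), Equiv.swap_comm (posB j) (posB i)] at h2
  rw [swp, swp, hposA]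
  rw [← mul_assoc, ← mul_assoc, h1, h2, Equiv.swap_comm]

/-! ### The homomorphism to the action monoid -/

def stepL : Letter n → Function.End (Option (Equiv.Perm (Fin n)))
  | none => fun _ => none
  | some i => stepi i

def F : FreeMonoid (Letter n) →* (Function.End (Option (Equiv.Perm (Fin n))))ᵐᵒᵖ :=
  FreeMonoid.lift (fun a => MulOpposite.op (stepL a))

lemma F_of (a : Letter n) : (F (FreeMonoid.of a)).unop = stepL a := by
  rw [F, FreeMonoid.lift_eval_of]
  rfl

lemma F_of_mul_of (a b : Letter n) :
    (F (FreeMonoid.of a * FreeMonoid.of b)).unop = fun st => stepL b (stepL a st) := by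
  rw [map_mul, MulOpposite.unop_mul, F_of, F_of]
  rfl

lemma F_of3 (a b c : Letter n) :
    (F (FreeMonoid.of a * FreeMonoid.of b * FreeMonoid.of c)).unop
      = fun st => stepL c (stepL b (stepL a st)) := by
  rw [map_mul, MulOpposite.unop_mul, F_of, F_of_mul_of]
  rfl

lemma stepL_none_apply (st : Option (Equiv.Perm (Fin n))) : stepL (none : Letter n) st = none := rfl

lemma F_rel : ∀ u v : FreeMonoid (Letter n), Rel n u v → F u = F v := by
  intro u v h
  apply MulOpposite.unop_injective
  cases h with
  | comm i j hij =>
    rw [F_of_mul_of, F_of_mul_of]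
    funext st
    cases st with
    | none => rfl
    | some σ =>
      have e1 : stepL (some (i : Fin (n-1))) (stepL (some j) (some σ)) = wAct [j, i] (some σ) := rfl
      have e2 : stepL (some (j : Fin (n-1))) (stepL (some i) (some σ)) = wAct [i, j] (some σ) := rfl
      rw [e1, e2, wAct_some, wAct_some]
      have hp : wprod [j, i] = wprod [i, j] := by
        simp only [wprod, List.map_cons, List.map_nil, List.prod_cons, List.prod_nil, mul_one]
        exact swp_comm hij
      rw [hp]
      simp only [List.length_cons, List.length_nil]
  | braid i j hij =>
    rw [F_of3, F_of3]
    funext st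
    cases st with
    | none => rfl
    | some σ =>
      have e1 : stepL (some (j : Fin (n-1))) (stepL (some i) (stepL (some j) (some σ)))
          = wAct [j, i, j] (some σ) := rfl
      have e2 : stepL (some (i : Fin (n-1))) (stepL (some j) (stepL (some i) (some σ)))
          = wAct [i, j, i] (some σ) := rfl
      rw [e1, e2, wAct_some, wAct_some]
      have hp : wprod [j, i, j] = wprod [i, j, i] := by
        simp only [wprod, List.map_cons, List.map_nil, List.prod_cons, List.prod_nil, mul_one]
        exact swp_braid hij
      rw [hp]
      simp only [List.length_cons, List.length_nil]
  | square i =>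
    rw [F_of_mul_of, F_of]
    funext st
    cases st with
    | none => rfl
    | some σ =>
      show stepi i (stepi i (some σ)) = none
      by_cases hc : σ (posA i) < σ (posB i)
      · rw [stepi_some, if_pos hc, stepi_some, if_neg]
        rw [not_lt]
        have ha : (σ * swp i) (posA i) = σ (posB i) := by
          rw [Equiv.Perm.mul_apply, swp, Equiv.swap_apply_left]
        have hb : (σ * swp i) (posB i) = σ (posA i) := by
          rw [Equiv.Perm.mul_apply, swp, Equiv.swap_apply_right]
        rw [ha, hb]
        exact hc.le
      · rw [stepi_some, if_neg hc, stepi_none]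
  | zright i =>
    rw [F_of_mul_of, F_of]
    funext st
    rfl
  | zleft i =>
    rw [F_of_mul_of, F_of]
    funext st
    cases st with
    | none => rfl
    | some σ => rfl
  | zz =>
    rw [F_of_mul_of, F_of]
    funext st
    rfl

def Phi : BMZ n →* (Function.End (Option (Equiv.Perm (Fin n))))ᵐᵒᵖ :=
  (bmzCon n).lift F (show bmzCon n ≤ Con.ker F from
    Con.conGen_le.mpr fun u v h => (Con.ker_rel F).mpr (F_rel u v h))

def act (x : BMZ n) (st : Option (Equiv.Perm (Fin n))) : Option (Equiv.Perm (Fin n)) :=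
  (Phi x).unop st

lemma act_mk (w : FreeMonoid (Letter n)) (st : Option (Equiv.Perm (Fin n))) :
    act (mk w) st = (F w).unop st := by
  rw [act, mk, Phi, Con.lift_mk']

lemma act_mul (x y : BMZ n) (st : Option (Equiv.Perm (Fin n))) :
    act (x * y) st = act y (act x st) := by
  rw [act, act, act, map_mul, MulOpposite.unop_mul]
  rfl

lemma act_one (st : Option (Equiv.Perm (Fin n))) : act 1 st = st := by
  rw [act, map_one]
  rfl

lemma act_gen (i : Fin (n - 1)) (st : Option (Equiv.Perm (Fin n))) :
    act (gen n i) st = stepi i st := by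
  rw [gen]
  have : (bmzCon n).mk' (FreeMonoid.of (some i)) = mk (FreeMonoid.of (some i)) := rfl
  rw [this, act_mk, F_of]
  rfl

lemma act_genNat (r : ℕ) (h1 : 1 ≤ r) (h2 : r ≤ n - 1) (st : Option (Equiv.Perm (Fin n))) :
    act (genNat n r) st = stepi ⟨r - 1, by omega⟩ st := by
  rw [genNat, dif_pos (show r - 1 < n - 1 by omega), act_gen]


/-! ### Cycles and the action of normal forms -/

def swpN (r : ℕ) : Equiv.Perm (Fin n) :=
  if h : r - 1 < n - 1 then swp ⟨r - 1, h⟩ else 1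

def cyc (p q : ℕ) : Equiv.Perm (Fin n) :=
  ((List.range' q (p + 1 - q)).reverse.map (swpN (n := n))).prod

lemma cyc_empty (p q : ℕ) (h : p + 1 ≤ q) : cyc (n := n) p q = 1 := by
  unfold cyc
  rw [show p + 1 - q = 0 by omega]
  simp

lemma cyc_cons_right (p q : ℕ) (h : q ≤ p) :
    cyc (n := n) p q = cyc p (q + 1) * swpN q := by
  unfold cyc
  rw [show p + 1 - q = (p + 1 - (q + 1)) + 1 by omega, List.range'_succ]
  simp [List.prod_append]

lemma swpN_fix (r : ℕ) (hr : 1 ≤ r) (x : Fin n) (h1 : x.val ≠ r - 1) (h2 : x.val ≠ r) :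
    swpN (n := n) r x = x := by
  rw [swpN]
  split_ifs with h
  · rw [swp]
    have hxA : x ≠ posA ⟨r - 1, h⟩ := by
      apply Fin.ne_of_val_ne
      show x.val ≠ r - 1
      omega
    have hxB : x ≠ posB ⟨r - 1, h⟩ := by
      apply Fin.ne_of_val_ne
      show x.val ≠ r - 1 + 1
      omega
    exact Equiv.swap_apply_of_ne_of_ne hxA hxB
  · rfl

lemma cyc_fix_low (p q : ℕ) (hq : 1 ≤ q) (x : Fin n) (hx : x.val + 1 < q) :
    cyc (n := n) p q x = x := by
  suffices H : ∀ k q, 1 ≤ q → p + 1 - q = k → x.val + 1 < q → cyc (n := n) p q x = x from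
    H _ q hq rfl hx
  intro k
  induction k with
  | zero =>
    intro q hq hk hx
    rw [cyc_empty p q (by omega)]
    rfl
  | succ k ih =>
    intro q hq hk hx
    rw [cyc_cons_right p q (by omega), Equiv.Perm.mul_apply,
      swpN_fix q hq x (by omega) (by omega), ih (q + 1) (by omega) (by omega) (by omega)]

lemma cyc_fix_high (p q : ℕ) (hq : 1 ≤ q) (x : Fin n) (hx : p < x.val) :
    cyc (n := n) p q x = x := by
  suffices H : ∀ k q, 1 ≤ q → p + 1 - q = k → cyc (n := n) p q x = x from H _ q hq rfl
  intro k
  induction k with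
  | zero =>
    intro q hq hk
    rw [cyc_empty p q (by omega)]
    rfl
  | succ k ih =>
    intro q hq hk
    rw [cyc_cons_right p q (by omega), Equiv.Perm.mul_apply,
      swpN_fix q hq x (by omega) (by omega), ih (q + 1) (by omega) (by omega)]

lemma cyc_bottom (p q : ℕ) (hq : 1 ≤ q) (hqp : q ≤ p + 1) (hp : p < n)
    (hx : q - 1 < n) : cyc (n := n) p q ⟨q - 1, hx⟩ = ⟨p, hp⟩ := by
  suffices H : ∀ k q (hq : 1 ≤ q), q ≤ p + 1 → p + 1 - q = k → ∀ (hx : q - 1 < n),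
      cyc (n := n) p q ⟨q - 1, hx⟩ = ⟨p, hp⟩ from H _ q hq hqp rfl hx
  intro k
  induction k with
  | zero =>
    intro q hq hqp hk hx
    rw [cyc_empty p q (by omega)]
    exact Fin.ext (by simp; omega)
  | succ k ih =>
    intro q hq hqp hk hx
    have hqn : q < n := by omega
    have hq1n : q - 1 < n - 1 := by omega
    have hstep : swpN (n := n) q ⟨q - 1, hx⟩ = ⟨q, hqn⟩ := by
      rw [swpN, dif_pos hq1n, swp]
      have hA : (⟨q - 1, hx⟩ : Fin n) = posA ⟨q - 1, hq1n⟩ := Fin.ext rfl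
      have hB : (posB ⟨q - 1, hq1n⟩ : Fin n) = ⟨q, hqn⟩ := Fin.ext (by
        rw [posB_val]
        show q - 1 + 1 = q
        omega)
      rw [hA, Equiv.swap_apply_left, hB]
    rw [cyc_cons_right p q (by omega), Equiv.Perm.mul_apply, hstep]
    have h2 := ih (q + 1) (by omega) (by omega) (by omega) (by omega)
    rw [show ((⟨q + 1 - 1, by omega⟩ : Fin n)) = (⟨q, hqn⟩ : Fin n) from Fin.ext (by simp)] at h2
    exact h2

/-- the action of a segment on a permutation fixing everything above the segment top -/
lemma act_betaSeg (p q : ℕ) (hq : 1 ≤ q) (hqp : q ≤ p + 1) (hp : p ≤ n - 1) (hn : 1 ≤ n)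
    (σ : Equiv.Perm (Fin n)) (hfix : ∀ x : Fin n, p ≤ x.val → σ x = x) :
    act (betaSeg n p q) (some σ) = some (σ * cyc p q) := by
  have hmaps : ∀ x : Fin n, x.val < p → (σ x).val < p := by
    intro x hxp
    by_contra hcon
    push_neg at hcon
    have h1 : σ (σ x) = σ x := hfix (σ x) hcon
    have h2 : σ x = x := σ.injective h1
    rw [h2] at hcon
    omega
  suffices H : ∀ k q, 1 ≤ q → q ≤ p + 1 → p + 1 - q = k →
      act (betaSeg n p q) (some σ) = some (σ * cyc p q) from H _ q hq hqp rfl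
  intro k
  induction k with
  | zero =>
    intro q hq hqp hk
    rw [betaSeg_empty p q (by omega), cyc_empty p q (by omega), mul_one]
    exact act_one _
  | succ k ih =>
    intro q hq hqp hk
    have hqp' : q ≤ p := by omega
    rw [betaSeg_cons_right p q hqp', act_mul, ih (q + 1) (by omega) (by omega) (by omega)]
    have hpn : p < n := by omega
    have hq1n : q - 1 < n := by omega
    have hqn : q < n := by omega
    have hτA : (σ * cyc (n := n) p (q + 1)) ⟨q - 1, hq1n⟩ = σ ⟨q - 1, hq1n⟩ := by
      rw [Equiv.Perm.mul_apply, cyc_fix_low p (q + 1) (by omega) _ (by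
        show q - 1 + 1 < q + 1
        omega)]
    have hbot : cyc (n := n) p (q + 1) ⟨q, hqn⟩ = ⟨p, hpn⟩ := by
      have h3 := cyc_bottom p (q + 1) (by omega) (by omega) hpn (by omega)
      rw [show ((⟨q + 1 - 1, by omega⟩ : Fin n)) = (⟨q, hqn⟩ : Fin n) from Fin.ext (by simp)] at h3
      exact h3
    have hτB : (σ * cyc (n := n) p (q + 1)) ⟨q, hqn⟩ = ⟨p, hpn⟩ := by
      rw [Equiv.Perm.mul_apply, hbot]
      exact hfix _ (by simp)
    have hq1n' : q - 1 < n - 1 := by omega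
    rw [act_genNat q hq (by omega), stepi_some, if_pos]
    · congr 1
      rw [cyc_cons_right p q hqp', ← mul_assoc]
      congr 1
      rw [swpN, dif_pos hq1n']
    · have hA : (posA ⟨q - 1, hq1n'⟩ : Fin n) = ⟨q - 1, hq1n⟩ := Fin.ext rfl
      have hB : (posB ⟨q - 1, hq1n'⟩ : Fin n) = ⟨q, hqn⟩ := Fin.ext (by
        rw [posB_val]
        show q - 1 + 1 = q
        omega)
      rw [hA, hB, hτA, hτB]
      have h4 := hmaps ⟨q - 1, hq1n⟩ (by
        show q - 1 < p
        omega)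
      rw [Fin.lt_def]
      exact h4


/-! ### Permutations of normal forms -/

def permR : List ℕ → ℕ → Equiv.Perm (Fin n)
  | [], _ => 1
  | q :: t, p => permR t (p - 1) * cyc p q

lemma permR_fix {t : List ℕ} {p : ℕ} (hv : Valid p t) (x : Fin n) (hx : p < x.val) :
    permR t p x = x := by
  induction hv with
  | nil => rfl
  | cons q p t hq1 hq2 hvt ih =>
    rw [permR, Nat.add_sub_cancel, Equiv.Perm.mul_apply,
      cyc_fix_high (p + 1) q hq1 x (by omega), ih (by omega)]

lemma permR_bottom {t : List ℕ} {q p : ℕ} (hv : Valid (p + 1) (q :: t)) (hp : p + 1 < n)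
    (hq1 : q - 1 < n) : permR (q :: t) (p + 1) ⟨q - 1, hq1⟩ = ⟨p + 1, hp⟩ := by
  cases hv with
  | cons _ _ _ hb1 hb2 hvt =>
    rw [permR, Nat.add_sub_cancel, Equiv.Perm.mul_apply,
      cyc_bottom (p + 1) q hb1 (by omega) hp hq1, permR_fix hvt _ (by simp)]

lemma permR_inj {t t' : List ℕ} {p : ℕ} (hp : p < n) (hv : Valid p t) (hv' : Valid p t')
    (h : permR (n := n) t p = permR t' p) : t = t' := by
  induction hv generalizing t' with
  | nil => cases hv'; rfl
  | cons q p t hq1 hq2 hvt ih =>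
    cases hv' with
    | cons q' _ t'' hq1' hq2' hvt' =>
      have hqn : q - 1 < n := by omega
      have hqn' : q' - 1 < n := by omega
      have hb := permR_bottom (Valid.cons q p t hq1 hq2 hvt) hp hqn
      have hb' := permR_bottom (Valid.cons q' p t'' hq1' hq2' hvt') hp hqn'
      rw [h] at hb
      have hqq : q = q' := by
        have := (permR (n := n) (q' :: t'') (p + 1)).injective (hb.trans hb'.symm)
        have hv2 := congrArg Fin.val this
        simp only [] at hv2
        omega
      subst hqq
      have hcancel : permR (n := n) t p = permR t'' p := by
        have h2 : permR (n := n) t p * cyc (p + 1) q = permR t'' p * cyc (p + 1) q := by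
          have e1 : permR (n := n) (q :: t) (p + 1) = permR t p * cyc (p + 1) q := by
            rw [permR, Nat.add_sub_cancel]
          have e2 : permR (n := n) (q :: t'') (p + 1) = permR t'' p * cyc (p + 1) q := by
            rw [permR, Nat.add_sub_cancel]
          rw [← e1, ← e2, h]
        exact mul_right_cancel h2
      rw [ih (by omega) hvt' hcancel]

lemma act_prodR {t : List ℕ} {p : ℕ} (hv : Valid p t) (hp : p ≤ n - 1) (hn : 1 ≤ n) :
    act (prodR n t p) (some 1) = some (permR t p) := by
  induction hv with
  | nil =>
    rw [prodR, permR]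
    exact act_one _
  | cons q p t hq1 hq2 hvt ih =>
    rw [prodR, permR, Nat.add_sub_cancel, act_mul, ih (by omega)]
    exact act_betaSeg (p + 1) q hq1 hq2 (by omega) hn (permR t p)
      (fun x hx => permR_fix hvt x (by omega))


/-! ### Conversion between tuples and lists -/

def qe (q : Fin (n - 1) → ℕ) (k : ℕ) : ℕ := if h : k < n - 1 then q ⟨k, h⟩ else 0

def listOf (q : Fin (n - 1) → ℕ) : List ℕ := ((List.range (n - 1)).map (qe q)).reverse

lemma listOf_valid {q : Fin (n - 1) → ℕ} (hb : ∀ i, 1 ≤ q i ∧ q i ≤ i.val + 2) :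
    Valid (n - 1) (listOf q) := by
  suffices H : ∀ m, m ≤ n - 1 → Valid m (((List.range m).map (qe q)).reverse) from
    H _ le_rfl
  intro m
  induction m with
  | zero => intro _; exact Valid.nil
  | succ m ih =>
    intro hm
    rw [List.range_succ, List.map_append, List.reverse_append]
    simp only [List.map_cons, List.map_nil, List.reverse_cons, List.reverse_nil,
      List.nil_append, List.singleton_append]
    have hmlt : m < n - 1 := by omega
    have hql := hb ⟨m, hmlt⟩
    refine Valid.cons _ m _ ?_ ?_ (ih (by omega))
    · rw [qe, dif_pos hmlt]; exact hql.1
    · rw [qe, dif_pos hmlt]; exact hql.2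

lemma prodR_listOf (q : Fin (n - 1) → ℕ) :
    prodR n (listOf q) (n - 1) = normalProd n q := by
  have H : ∀ m, m ≤ n - 1 → prodR n (((List.range m).map (qe q)).reverse) m
      = ((List.range m).map (fun k => betaSeg n (k + 1) (qe q k))).prod := by
    intro m
    induction m with
    | zero => intro _; rfl
    | succ m ih =>
      intro hm
      rw [List.range_succ, List.map_append, List.reverse_append]
      simp only [List.map_cons, List.map_nil, List.reverse_cons, List.reverse_nil,
        List.nil_append, List.singleton_append]
      rw [prodR, Nat.add_sub_cancel, ih (by omega), List.map_append, List.prod_append]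
      simp
  rw [listOf, H (n - 1) le_rfl, normalProd, ← (show (List.finRange (n - 1)).map Fin.val = List.range (n - 1) from
    List.ext_getElem (by simp) (by simp)), List.map_map]
  refine congrArg List.prod ?_
  apply List.map_congr_left
  intro i _
  simp only [Function.comp_apply, qe, dif_pos i.isLt]

lemma valid_getD {t : List ℕ} {p : ℕ} (hv : Valid p t) :
    ∀ k, k < p → 1 ≤ t.getD k 0 ∧ t.getD k 0 ≤ p - k + 1 := by
  induction hv with
  | nil => intro k hk; omega
  | cons q p t hq1 hq2 hvt ih =>
    intro k hk
    cases k with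
    | zero => rw [List.getD_cons_zero]; omega
    | succ k =>
      rw [List.getD_cons_succ]
      have := ih k (by omega)
      omega

lemma valid_eq_listOf {t : List ℕ} (hn : 1 ≤ n) (hv : Valid (n - 1) t) :
    ∃ q0 : Fin (n - 1) → ℕ, (∀ i, 1 ≤ q0 i ∧ q0 i ≤ i.val + 2) ∧ t = listOf q0 := by
  refine ⟨fun i => t.getD (n - 2 - i.val) 0, ?_, ?_⟩
  · intro i
    have hi := i.isLt
    have hb := valid_getD hv (n - 2 - i.val) (by omega)
    have he : n - 1 - (n - 2 - i.val) + 1 = i.val + 2 := by omega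
    rw [he] at hb
    exact hb
  · have hlen : t.length = n - 1 := valid_length hv
    rw [listOf]
    refine List.ext_getElem (by simp [hlen]) ?_
    intro k h1 h2
    have hk : k < n - 1 := by rw [hlen] at h1; exact h1
    rw [List.getElem_reverse]
    simp only [List.length_map, List.length_range, List.getElem_map, List.getElem_range]
    rw [qe, dif_pos (show n - 1 - 1 - k < n - 1 by omega)]
    show t[k]'h1 = t.getD (n - 2 - (n - 1 - 1 - k)) 0
    rw [show n - 2 - (n - 1 - 1 - k) = k by omega,
      List.getD_eq_getElem t 0 (show k < t.length by omega)]


/-! ### Uniqueness of normal forms -/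

lemma normalProd_inj {q q' : Fin (n - 1) → ℕ} (hn : 1 ≤ n)
    (hb : ∀ i, 1 ≤ q i ∧ q i ≤ i.val + 2) (hb' : ∀ i, 1 ≤ q' i ∧ q' i ≤ i.val + 2)
    (h : normalProd n q = normalProd n q') : q = q' := by
  have h1 : act (normalProd n q) (some 1) = some (permR (listOf q) (n - 1)) := by
    rw [← prodR_listOf]
    exact act_prodR (listOf_valid hb) le_rfl hn
  have h2 : act (normalProd n q') (some 1) = some (permR (listOf q') (n - 1)) := by
    rw [← prodR_listOf]
    exact act_prodR (listOf_valid hb') le_rfl hn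
  rw [h, h2] at h1
  have h3 : permR (n := n) (listOf q') (n - 1) = permR (listOf q) (n - 1) :=
    Option.some.inj h1
  have h4 : listOf q' = listOf q :=
    permR_inj (by omega) (listOf_valid hb') (listOf_valid hb) h3
  have h5 : (List.range (n - 1)).map (qe q') = (List.range (n - 1)).map (qe q) := by
    have := congrArg List.reverse h4
    rwa [listOf, listOf, List.reverse_reverse, List.reverse_reverse] at this
  funext i
  have hi := i.isLt
  have hlt : i.val < ((List.range (n - 1)).map (qe q')).length := by simp [hi]
  have hlt2 : i.val < ((List.range (n - 1)).map (qe q)).length := by simp [hi]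
  have h7 := congrArg (fun l : List ℕ => l.getD i.val 0) h5
  rw [List.getD_eq_getElem _ _ hlt, List.getD_eq_getElem _ _ hlt2] at h7
  simp only [List.getElem_map, List.getElem_range] at h7
  rw [qe, qe, dif_pos hi, dif_pos hi] at h7
  simpa using h7.symm

/-- Every non-zero element `x` of the braid monoid with zero `𝔹ₙ` can be
written as a product `x = β_{1,q₁} · β_{2,q₂} · ⋯ · β_{n−1,q_{n−1}}` with `1 ≤ q_p ≤ p+1`
for each `1 ≤ p ≤ n−1`, and the tuple `(q₁, …, q_{n−1})` satisfying these bounds is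
uniquely determined by `x`. (Here `q i` is `q_{i+1}`, so the bound reads
`1 ≤ q i ≤ i.val + 2`.) -/
theorem existsUnique_normal_form (n : ℕ) (hn : 1 ≤ n) (x : BMZ n) (hx : x ≠ zero n) :
    ∃! q : Fin (n - 1) → ℕ,
      (∀ i : Fin (n - 1), 1 ≤ q i ∧ q i ≤ i.val + 2) ∧ x = normalProd n q := by
  obtain ⟨w, hw⟩ := Con.mk'_surjective x
  have hwmk : mk w = x := hw
  rcases mk_eq_zero_or_nf w with hz | ⟨t, hv, heq⟩
  · exact absurd (hwmk ▸ hz) hx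
  · obtain ⟨q0, hb0, ht0⟩ := valid_eq_listOf hn hv
    have hx0 : x = normalProd n q0 := by
      rw [← hwmk, heq, ht0, prodR_listOf]
    refine ⟨q0, ⟨hb0, hx0⟩, ?_⟩
    rintro q' ⟨hb', hx'⟩
    exact normalProd_inj hn hb' hb0 (by rw [← hx', ← hx0])


end BraidMonoidZero
end

section
/- Let n ≥ 1 and let q₁, …, q_{n−1} be integers with 1 ≤ q_p ≤ p+1 for each p. Let σ ∈ Sₙ be the permutation σ = c₁ ∘ c₂ ∘ ⋯ ∘ c_{n−1}, where c_p = s_p ∘ s_{p−1} ∘ ⋯ ∘ s_{q_p} (with c_p = id when q_p = p+1). Then for each 1 ≤ p ≤ n−1, q_p equals the number of r with 1 ≤ r ≤ p+1 and σ⁻¹(r) ≤ σ⁻¹(p+1). -/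
/-!
Statement 3: Let `n ≥ 1` and let `q₁, …, q_{n−1}` be integers with `1 ≤ q_p ≤ p+1`.
Let `σ ∈ Sₙ` be the permutation `σ = c₁ ∘ c₂ ∘ ⋯ ∘ c_{n−1}` where
`c_p = s_p ∘ s_{p−1} ∘ ⋯ ∘ s_{q_p}` (with `c_p = id` when `q_p = p + 1`), and `s_r` is
the transposition exchanging `r` and `r+1`.  Then for each `1 ≤ p ≤ n−1`, `q_p` equals
the number of `r` with `1 ≤ r ≤ p+1` and `σ⁻¹(r) ≤ σ⁻¹(p+1)`.

We model `{1, …, n}` by `Fin n` (0-indexed), so the 1-based element `r` corresponds to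
the `Fin n` value `r - 1`, and `s_r` swaps the `Fin n` values `r - 1` and `r`.
-/

namespace PermNormalForm

/-- The transposition `s_r` exchanging `r` and `r+1` in `{1, …, n}`, i.e. swapping the
0-indexed positions `r - 1` and `r` of `Fin n` (the identity for out-of-range `r`). -/
def sNat (n r : ℕ) : Equiv.Perm (Fin n) :=
  if h : 0 < r ∧ r < n then Equiv.swap ⟨r - 1, by omega⟩ ⟨r, h.2⟩ else 1

/-- `cSeg n p q` is `c = s_p ∘ s_{p−1} ∘ ⋯ ∘ s_q` (the identity when `q = p + 1`);
recall that multiplication of permutations is composition. -/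
def cSeg (n p q : ℕ) : Equiv.Perm (Fin n) :=
  ((List.range' q (p + 1 - q)).reverse.map (sNat n)).prod

/-- The permutation `σ = c₁ ∘ c₂ ∘ ⋯ ∘ c_{n−1}` with `c_p = s_p ∘ ⋯ ∘ s_{q_p}`,
where the value `q i` corresponds to `q_{i+1}` for `i : Fin (n-1)`. -/
def sigmaOf (n : ℕ) (q : Fin (n - 1) → ℕ) : Equiv.Perm (Fin n) :=
  ((List.finRange (n - 1)).map (fun i => cSeg n (i.val + 1) (q i))).prod

lemma Equiv.Perm.inv_apply_self {α : Type*} (f : Equiv.Perm α) (x : α) : f⁻¹ (f x) = x :=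
  Equiv.Perm.inv_eq_iff_eq.mpr rfl

lemma Equiv.Perm.apply_inv_self {α : Type*} (f : Equiv.Perm α) (x : α) : f (f⁻¹ x) = x :=
  (Equiv.eq_symm_apply f).mp rfl

lemma cSeg_id (n p q : ℕ) (h : p < q) : cSeg n p q = 1 := by
  unfold cSeg
  have : p + 1 - q = 0 := by omega
  simp [this]

lemma cSeg_succ (n p q : ℕ) (hq : 1 ≤ q) (h : q ≤ p) :
    cSeg n p q = sNat n p * cSeg n (p - 1) q := by
  unfold cSeg
  have h1 : p + 1 - q = (p - q) + 1 := by omega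
  have h2 : p - 1 + 1 - q = p - q := by omega
  rw [h1, h2, List.range'_1_concat]
  have h3 : q + (p - q) = p := by omega
  rw [h3, List.reverse_append, List.reverse_singleton]
  simp

lemma cSeg_apply (n p q : ℕ) (hq : 1 ≤ q) (hqp : q ≤ p + 1) (hp : p < n) (x : Fin n) :
    ((cSeg n p q) x).val =
      if x.val + 1 < q ∨ p < x.val then x.val
      else if x.val + 1 = q then p else x.val - 1 := by
  obtain ⟨d, rfl⟩ : ∃ d, p = q - 1 + d := ⟨p - (q - 1), by omega⟩
  induction d with
  | zero =>
    rw [cSeg_id n _ q (by omega)]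
    simp only [Equiv.Perm.one_apply]
    split_ifs <;> omega
  | succ d ih =>
    set p := q - 1 + (d + 1) with hpdef
    have hp1 : 1 ≤ p := by omega
    have hqle : q ≤ p := by omega
    rw [cSeg_succ n p q hq hqle, Equiv.Perm.mul_apply]
    have hy := ih (by omega) (by omega)
    rw [show p - 1 = q - 1 + d by omega]
    set y := cSeg n (q - 1 + d) q x with hydef
    have hyp : (q:ℕ) - 1 + d = p - 1 := by omega
    unfold sNat
    rw [dif_pos ⟨by omega, hp⟩]
    by_cases h1 : y = (⟨p - 1, by omega⟩ : Fin n)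
    · have h1' : y.val = p - 1 := by rw [h1]
      rw [h1, Equiv.swap_apply_left]
      rw [h1'] at hy
      show p = _
      split_ifs at hy ⊢ <;> omega
    · by_cases h2 : y = (⟨p, hp⟩ : Fin n)
      · have h2' : y.val = p := by rw [h2]
        rw [h2, Equiv.swap_apply_right]
        rw [h2'] at hy
        show p - 1 = _
        split_ifs at hy ⊢ <;> omega
      · rw [Equiv.swap_apply_of_ne_of_ne h1 h2]
        have h1' : y.val ≠ p - 1 := fun h => h1 (Fin.ext h)
        have h2' : y.val ≠ p := fun h => h2 (Fin.ext h)
        rw [hy]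
        rw [hy] at h1' h2'
        split_ifs at h1' h2' ⊢ <;> omega


lemma cSeg_fix {n p q : ℕ} (hq : 1 ≤ q) (hqp : q ≤ p + 1) (hp : p < n) {x : Fin n}
    (hx : p < x.val) : cSeg n p q x = x := by
  apply Fin.ext
  rw [cSeg_apply n p q hq hqp hp x]
  split_ifs <;> omega

lemma cSeg_inv_fix {n p q : ℕ} (hq : 1 ≤ q) (hqp : q ≤ p + 1) (hp : p < n) {x : Fin n}
    (hx : p < x.val) : (cSeg n p q)⁻¹ x = x := by
  rw [Equiv.Perm.inv_eq_iff_eq]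
  exact (cSeg_fix hq hqp hp hx).symm

lemma cSeg_inv_last {n p q : ℕ} (hq : 1 ≤ q) (hqp : q ≤ p + 1) (hp : p < n) :
    (cSeg n p q)⁻¹ ⟨p, hp⟩ = ⟨q - 1, by omega⟩ := by
  rw [Equiv.Perm.inv_eq_iff_eq]
  apply Fin.ext
  rw [cSeg_apply n p q hq hqp hp ⟨q - 1, by omega⟩]
  show p = if q - 1 + 1 < q ∨ p < q - 1 then q - 1 else if q - 1 + 1 = q then p else q - 1 - 1
  split_ifs <;> omega

lemma cSeg_inv_apply {n p q : ℕ} (hq : 1 ≤ q) (hqp : q ≤ p + 1) (hp : p < n) (x : Fin n)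
    (hx : x.val < p) :
    ((cSeg n p q)⁻¹ x).val = if x.val + 1 < q then x.val else x.val + 1 := by
  have hd : (if x.val + 1 < q then x.val else x.val + 1) < n := by split <;> omega
  set d := if x.val + 1 < q then x.val else x.val + 1 with hddef
  have key : cSeg n p q ⟨d, hd⟩ = x := by
    apply Fin.ext
    rw [cSeg_apply n p q hq hqp hp]
    show (if d + 1 < q ∨ p < d then d else if d + 1 = q then p else d - 1) = x.val
    by_cases hc : x.val + 1 < q
    · rw [show d = x.val from if_pos hc]
      split_ifs <;> omega
    · rw [show d = x.val + 1 from if_neg hc]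
      split_ifs <;> omega
  rw [← key, Equiv.Perm.inv_apply_self]


lemma prod_fix {n : ℕ} (l : List (Equiv.Perm (Fin n))) (x : Fin n)
    (h : ∀ g ∈ l, g x = x) : l.prod x = x := by
  induction l with
  | nil => rfl
  | cons a t ih =>
    rw [List.prod_cons, Equiv.Perm.mul_apply,
      ih (fun g hg => h g (List.mem_cons_of_mem _ hg)), h a (List.mem_cons_self (a := a) (l := t))]

lemma prod_inv_mono (n : ℕ) (Q : ℕ → ℕ) (hQ : ∀ k, k < n - 1 → 1 ≤ Q k ∧ Q k ≤ k + 2) :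
    ∀ (len m : ℕ), m + len ≤ n - 1 → ∀ a : Fin n, a.val ≤ m →
      ((((List.range' m len).map (fun k => cSeg n (k + 1) (Q k))).prod)⁻¹ a).val ≤ m + len ∧
      ∀ b : Fin n, b.val ≤ m → a.val < b.val →
        ((((List.range' m len).map (fun k => cSeg n (k + 1) (Q k))).prod)⁻¹ a).val <
        ((((List.range' m len).map (fun k => cSeg n (k + 1) (Q k))).prod)⁻¹ b).val := by
  intro len
  induction len with
  | zero =>
    intro m hm a ha
    simp only [List.range', List.map_nil, List.prod_nil, inv_one, Equiv.Perm.one_apply]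
    exact ⟨by omega, fun b hb hab => hab⟩
  | succ len ih =>
    intro m hm a ha
    rw [List.range'_succ]
    simp only [List.map_cons, List.prod_cons, mul_inv_rev, Equiv.Perm.mul_apply]
    have hm1 : m < n - 1 := by omega
    have hQm := hQ m hm1
    have hp : m + 1 < n := by omega
    have hfa := cSeg_inv_apply (n := n) (p := m + 1) (q := Q m) hQm.1 (by omega) hp a (by omega)
    have ha' : ((cSeg n (m + 1) (Q m))⁻¹ a).val ≤ m + 1 := by rw [hfa]; split <;> omega
    obtain ⟨h1, h2⟩ := ih (m + 1) (by omega) _ ha'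
    refine ⟨by omega, fun b hb hab => ?_⟩
    have hfb := cSeg_inv_apply (n := n) (p := m + 1) (q := Q m) hQm.1 (by omega) hp b (by omega)
    have hb' : ((cSeg n (m + 1) (Q m))⁻¹ b).val ≤ m + 1 := by rw [hfb]; split <;> omega
    exact h2 _ hb' (by rw [hfa, hfb]; split_ifs <;> omega)


/-- With `σ = c₁ ∘ ⋯ ∘ c_{n−1}` as above, for each `1 ≤ p ≤ n−1` the
value `q_p` equals the number of `r` with `1 ≤ r ≤ p+1` and `σ⁻¹(r) ≤ σ⁻¹(p+1)`.
(For `i : Fin (n-1)` we have `p = i + 1`; the 1-based elements `r ∈ {1, …, p+1}` are the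
`Fin n` values `j` with `j ≤ i + 1`, and `p + 1` is the `Fin n` value `i + 1`.) -/
theorem normal_form_count (n : ℕ) (hn : 1 ≤ n) (q : Fin (n - 1) → ℕ)
    (hq : ∀ i : Fin (n - 1), 1 ≤ q i ∧ q i ≤ i.val + 2) :
    ∀ i : Fin (n - 1),
      q i = (Finset.univ.filter (fun j : Fin n =>
          j.val ≤ i.val + 1 ∧
            (sigmaOf n q)⁻¹ j ≤ (sigmaOf n q)⁻¹ ⟨i.val + 1, by have h := i.isLt; omega⟩)).card := by
  intro i
  have hi : i.val < n - 1 := i.isLt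
  suffices main : ∀ t : Fin n, t.val = i.val + 1 →
      q i = (Finset.univ.filter (fun j : Fin n =>
        j.val ≤ i.val + 1 ∧ (sigmaOf n q)⁻¹ j ≤ (sigmaOf n q)⁻¹ t)).card by
    exact main _ rfl
  intro t ht
  classical
  set Q : ℕ → ℕ := fun k => if h : k < n - 1 then q ⟨k, h⟩ else 1 with hQdef
  have hQ : ∀ k, k < n - 1 → 1 ≤ Q k ∧ Q k ≤ k + 2 := by
    intro k hk
    simp only [hQdef, dif_pos hk]
    exact hq ⟨k, hk⟩
  have hqQ : q i = Q i.val := by simp only [hQdef, dif_pos hi, Fin.eta]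
  set C : ℕ → Equiv.Perm (Fin n) := fun k => cSeg n (k + 1) (Q k) with hCdef
  have hσ : sigmaOf n q = ((List.range (n - 1)).map C).prod := by
    unfold sigmaOf
    congr 1
    rw [← List.map_coe_finRange_eq_range, List.map_map]
    apply List.map_congr_left
    intro j _
    simp only [Function.comp_apply, hCdef, hQdef, dif_pos j.isLt, Fin.eta]
  set A : Equiv.Perm (Fin n) := ((List.range i.val).map C).prod with hAdef
  set B : Equiv.Perm (Fin n) :=
    ((List.range' (i.val + 1) (n - 2 - i.val)).map C).prod with hBdef
  set T : Equiv.Perm (Fin n) := A * C i.val with hTdef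
  have hsplit : List.range (n - 1)
      = (List.range i.val ++ [i.val]) ++ List.range' (i.val + 1) (n - 2 - i.val) := by
    rw [List.range_eq_range', List.range_eq_range']
    have e1 : List.range' 0 i.val ++ [i.val] = List.range' 0 (i.val + 1) := by
      rw [List.range'_1_concat, Nat.zero_add]
    rw [e1]
    have e2 := List.range'_append_1 (s := 0) (m := i.val + 1) (n := n - 2 - i.val)
    rw [Nat.zero_add] at e2
    rw [e2]
    congr 1
    omega
  have hσ2 : sigmaOf n q = T * B := by
    rw [hσ, hsplit, List.map_append, List.prod_append, List.map_append, List.prod_append,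
      List.map_singleton, List.prod_singleton]
  have hσinv : ∀ x : Fin n, (sigmaOf n q)⁻¹ x = B⁻¹ (T⁻¹ x) := by
    intro x
    rw [hσ2, mul_inv_rev, Equiv.Perm.mul_apply]
  have hAfix : ∀ x : Fin n, i.val < x.val → A x = x := by
    intro x hx
    apply prod_fix
    intro g hg
    rw [List.mem_map] at hg
    obtain ⟨k, hk, rfl⟩ := hg
    rw [List.mem_range] at hk
    exact cSeg_fix (hQ k (by omega)).1 (hQ k (by omega)).2 (by omega) (by omega)
  have hTfix : ∀ x : Fin n, i.val + 1 < x.val → T x = x := by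
    intro x hx
    have hC : C i.val x = x :=
      cSeg_fix (hQ i.val hi).1 (hQ i.val hi).2 (by omega) (by omega)
    rw [hTdef, Equiv.Perm.mul_apply, hC]
    exact hAfix x (by omega)
  have hTinvfix : ∀ x : Fin n, i.val + 1 < x.val → T⁻¹ x = x := by
    intro x hx
    rw [Equiv.Perm.inv_eq_iff_eq]
    exact (hTfix x hx).symm
  have hTinv_mem : ∀ x : Fin n, x.val ≤ i.val + 1 → (T⁻¹ x).val ≤ i.val + 1 := by
    intro x hx
    by_contra h
    push_neg at h
    have h2 := hTfix _ h
    rw [Equiv.Perm.apply_inv_self] at h2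
    rw [← h2] at h
    omega
  have hT_mem : ∀ x : Fin n, x.val ≤ i.val + 1 → (T x).val ≤ i.val + 1 := by
    intro x hx
    by_contra h
    push_neg at h
    have h2 := hTinvfix _ h
    rw [Equiv.Perm.inv_apply_self] at h2
    rw [← h2] at h
    omega
  have hc : Q i.val - 1 < n := by
    have := (hQ i.val hi).2
    omega
  set c : Fin n := ⟨Q i.val - 1, hc⟩ with hcdef
  have hcval : c.val = Q i.val - 1 := rfl
  have hcle : c.val ≤ i.val + 1 := by
    have := (hQ i.val hi).2
    rw [hcval]
    omega
  have hT1 : T⁻¹ t = c := by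
    have ht' : t = (⟨i.val + 1, by omega⟩ : Fin n) := Fin.ext ht
    rw [hTdef, mul_inv_rev, Equiv.Perm.mul_apply, ht']
    have hA : A⁻¹ (⟨i.val + 1, by omega⟩ : Fin n) = ⟨i.val + 1, by omega⟩ := by
      rw [Equiv.Perm.inv_eq_iff_eq]
      exact (hAfix _ (by simp)).symm
    rw [hA]
    exact cSeg_inv_last (hQ i.val hi).1 (hQ i.val hi).2 (by omega)
  have hBmono := prod_inv_mono n Q hQ (n - 2 - i.val) (i.val + 1) (by omega)
  rw [← hBdef] at hBmono
  have hBiff : ∀ a b : Fin n, a.val ≤ i.val + 1 → b.val ≤ i.val + 1 →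
      (B⁻¹ a ≤ B⁻¹ b ↔ a ≤ b) := by
    intro a b ha hb
    constructor
    · intro h
      by_contra h'
      push_neg at h'
      have hlt := (hBmono b hb).2 a ha (Fin.lt_def.1 h')
      rw [Fin.le_def] at h
      omega
    · intro h
      rcases eq_or_lt_of_le h with rfl | hlt
      · exact le_refl _
      · rw [Fin.le_def]
        exact le_of_lt ((hBmono a ha).2 b hb (Fin.lt_def.1 hlt))
  have hcond : ∀ j : Fin n,
      (j.val ≤ i.val + 1 ∧ (sigmaOf n q)⁻¹ j ≤ (sigmaOf n q)⁻¹ t) ↔ T⁻¹ j ≤ c := by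
    intro j
    constructor
    · rintro ⟨hj, hle⟩
      rw [hσinv, hσinv, hT1] at hle
      exact (hBiff _ _ (hTinv_mem j hj) hcle).1 hle
    · intro h
      have hjc : (T⁻¹ j).val ≤ i.val + 1 := le_trans (Fin.le_def.1 h) hcle
      have hj : j.val ≤ i.val + 1 := by
        have h2 := hT_mem (T⁻¹ j) hjc
        rwa [Equiv.Perm.apply_inv_self] at h2
      refine ⟨hj, ?_⟩
      rw [hσinv, hσinv, hT1]
      exact (hBiff _ _ hjc hcle).2 h
  rw [Finset.filter_congr (fun j _ => hcond j)]
  have hbij : (Finset.univ.filter (fun j : Fin n => T⁻¹ j ≤ c)).card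
      = (Finset.univ.filter (fun x : Fin n => x ≤ c)).card := by
    refine Finset.card_bij' (fun j _ => T⁻¹ j) (fun x _ => T x) ?_ ?_ ?_ ?_
    · intro j hj
      simp only [Finset.mem_filter, Finset.mem_univ, true_and] at hj ⊢
      exact hj
    · intro x hx
      simp only [Finset.mem_filter, Finset.mem_univ, true_and] at hx ⊢
      rw [Equiv.Perm.inv_apply_self]
      exact hx
    · intro j _
      exact Equiv.Perm.apply_inv_self T j
    · intro x _
      exact Equiv.Perm.inv_apply_self T x
  rw [hbij]
  have hIic : (Finset.univ.filter (fun x : Fin n => x ≤ c)) = Finset.Iic c := by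
    ext x
    simp
  rw [hIic, Fin.card_Iic]
  rw [hqQ, hcval]
  have := (hQ i.val hi).1
  omega


end PermNormalForm
end

section
/- Let ⪯₀ ⊴ ⪯₁ be shuffles on S(s,t) with ⪯₀ ≠ ⪯₁. Then there exist elements (i|k), (j|ℓ) ∈ S(s,t) with i < j such that (i|k) is the immediate ⪯₀-successor of (j|ℓ), (i|k) ⪯₁ (j|ℓ), and the total order ⪯ obtained from ⪯₀ by transposing (i|k) and (j|ℓ) (i.e., agreeing with ⪯₀ on all pairs except that (i|k) ⪯ (j|ℓ)) is a shuffle on S(s,t) satisfying ⪯₀ ⊴ ⪯ ⊴ ⪯₁. -/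
/-!
Shuffles on `S(s,t)`.  Fix `a ≥ 1` and tuples `s, t ∈ ℕᵃ` with `sᵢ ≤ tᵢ`.  We let
`S(s,t) = {(i|k) : 1 ≤ i ≤ a, sᵢ < k ≤ tᵢ}` (with indices `i` modelled by `Fin a`),
a *shuffle* on `S(s,t)` is a total order `⪯` such that `(i|k) ⪯ (i|ℓ)` whenever
`k ≤ ℓ`, and `⪯ ⊴ ⪯′` means that `(i|k) ⪯ (j|ℓ)` implies `(i|k) ⪯′ (j|ℓ)` whenever
`i < j`.
-/

namespace GrayShuffle

/-- The set `S(s,t)`: pairs `(i|k)` with `sᵢ < k ≤ tᵢ`. -/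
def Idx (a : ℕ) (s t : Fin a → ℕ) : Type :=
  {p : Fin a × ℕ // s p.1 < p.2 ∧ p.2 ≤ t p.1}

/-- A shuffle on `S(s,t)`: a total order `⪯` such that `(i|k) ⪯ (i|ℓ)` whenever
`sᵢ < k ≤ ℓ ≤ tᵢ`. -/
structure Shuffle (a : ℕ) (s t : Fin a → ℕ) where
  le : Idx a s t → Idx a s t → Prop
  refl : ∀ x, le x x
  trans : ∀ x y z, le x y → le y z → le x z
  antisymm : ∀ x y, le x y → le y x → x = y
  total : ∀ x y, le x y ∨ le y x
  compat : ∀ x y, x.1.1 = y.1.1 → x.1.2 ≤ y.1.2 → le x y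

variable {a : ℕ} {s t : Fin a → ℕ}

/-- `Dominates r r'` is the relation `⪯ ⊴ ⪯′`. -/
def Dominates (r r' : Shuffle a s t) : Prop :=
  ∀ x y : Idx a s t, x.1.1 < y.1.1 → r.le x y → r'.le x y

/-- `y` is the immediate `r`-successor of `x`. -/
def ImmediateSucc (r : Shuffle a s t) (x y : Idx a s t) : Prop :=
  r.le x y ∧ x ≠ y ∧ ∀ z, r.le x z → r.le z y → z = x ∨ z = y

/-- The total order obtained from `r` by transposing `u` and `v`: it agrees with `r`
on all pairs except that `u ⪯ v` (rather than `v ⪯ u`). -/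
def transposeLe (r : Shuffle a s t) (u v : Idx a s t) :
    Idx a s t → Idx a s t → Prop :=
  fun x y => (x = u ∧ y = v) ∨ (¬(x = v ∧ y = u) ∧ r.le x y)


instance : Finite (Idx a s t) := by
  have hb : ∀ p : Idx a s t, p.1.2 < Finset.univ.sup t + 1 := fun p =>
    Nat.lt_succ_of_le (p.2.2.trans (Finset.le_sup (Finset.mem_univ p.1.1)))
  exact Finite.of_injective
    (fun p : Idx a s t => ((p.1.1, ⟨p.1.2, hb p⟩) : Fin a × Fin (Finset.univ.sup t + 1)))
    (fun p q h => by
      simp only [Prod.mk.injEq, Fin.mk.injEq] at h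
      exact Subtype.ext (Prod.ext h.1 h.2))

lemma exists_adjacent (r₀ r₁ : Shuffle a s t)
    (h : ∃ x y, r₀.le x y ∧ x ≠ y ∧ ¬ r₁.le x y) :
    ∃ x y, r₀.le x y ∧ x ≠ y ∧ (∀ z, r₀.le x z → r₀.le z y → z = x ∨ z = y)
      ∧ ¬ r₁.le x y := by
  obtain ⟨x₀, y₀, hxy₀, hne₀, hr₀⟩ := h
  have key : ∀ n x y, ({z | r₀.le x z ∧ r₀.le z y}).ncard ≤ n →
      r₀.le x y → x ≠ y → ¬ r₁.le x y →
      ∃ x y, r₀.le x y ∧ x ≠ y ∧ (∀ z, r₀.le x z → r₀.le z y → z = x ∨ z = y)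
        ∧ ¬ r₁.le x y := by
    intro n
    induction n with
    | zero =>
      intro x y hcard hxy hne hr
      exfalso
      have hx : x ∈ {z | r₀.le x z ∧ r₀.le z y} := ⟨r₀.refl x, hxy⟩
      have : 0 < ({z | r₀.le x z ∧ r₀.le z y}).ncard :=
        Set.ncard_pos (Set.toFinite _) |>.mpr ⟨x, hx⟩
      omega
    | succ n ih =>
      intro x y hcard hxy hne hr
      by_cases hadj : ∀ z, r₀.le x z → r₀.le z y → z = x ∨ z = y
      · exact ⟨x, y, hxy, hne, hadj, hr⟩
      · push_neg at hadj
        obtain ⟨z, hxz, hzy, hzx, hzy'⟩ := hadj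
        by_cases h1 : r₁.le x z
        · have hr' : ¬ r₁.le z y := fun h2 => hr (r₁.trans _ _ _ h1 h2)
          have hsub : {w | r₀.le z w ∧ r₀.le w y} ⊂ {w | r₀.le x w ∧ r₀.le w y} := by
            constructor
            · intro w ⟨hw1, hw2⟩; exact ⟨r₀.trans _ _ _ hxz hw1, hw2⟩
            · intro hsub'
              have hx' : x ∈ {w | r₀.le z w ∧ r₀.le w y} := hsub' ⟨r₀.refl x, hxy⟩
              exact hzx (r₀.antisymm _ _ hx'.1 hxz)
          have hlt := Set.ncard_lt_ncard hsub (Set.toFinite _)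
          exact ih z y (by omega) hzy hzy' hr'
        · have hsub : {w | r₀.le x w ∧ r₀.le w z} ⊂ {w | r₀.le x w ∧ r₀.le w y} := by
            constructor
            · intro w ⟨hw1, hw2⟩; exact ⟨hw1, r₀.trans _ _ _ hw2 hzy⟩
            · intro hsub'
              have hy' : y ∈ {w | r₀.le x w ∧ r₀.le w z} := hsub' ⟨hxy, r₀.refl y⟩
              exact hzy' (r₀.antisymm _ _ hzy hy'.2)
          have hlt := Set.ncard_lt_ncard hsub (Set.toFinite _)
          exact ih x z (by omega) hxz (fun e => hzx e.symm) h1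
  exact key _ x₀ y₀ le_rfl hxy₀ hne₀ hr₀

/-- Let `⪯₀ ⊴ ⪯₁` be shuffles on `S(s,t)` with `⪯₀ ≠ ⪯₁`.  Then there
exist `(i|k) = u` and `(j|ℓ) = v` in `S(s,t)` with `i < j` such that `u` is the
immediate `⪯₀`-successor of `v`, `u ⪯₁ v`, and the total order `⪯` obtained from `⪯₀`
by transposing `u` and `v` is a shuffle satisfying `⪯₀ ⊴ ⪯ ⊴ ⪯₁`. -/
theorem statement4 (a : ℕ) (ha : 1 ≤ a) (s t : Fin a → ℕ) (hst : ∀ i, s i ≤ t i)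
    (r₀ r₁ : Shuffle a s t) (hdom : Dominates r₀ r₁) (hne : r₀.le ≠ r₁.le) :
    ∃ u v : Idx a s t, u.1.1 < v.1.1 ∧ ImmediateSucc r₀ v u ∧ r₁.le u v ∧
      ∃ r' : Shuffle a s t, r'.le = transposeLe r₀ u v ∧
        Dominates r₀ r' ∧ Dominates r' r₁ := by
  -- find a pair where the orders disagree
  have hex : ∃ x y, r₀.le x y ∧ x ≠ y ∧ ¬ r₁.le x y := by
    by_contra h
    push_neg at h
    apply hne
    funext x y
    apply propext
    constructor
    · intro h0
      by_cases hxy : x = y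
      · subst hxy; exact r₁.refl x
      · exact h x y h0 hxy
    · intro h1
      rcases r₀.total x y with h0 | h0
      · exact h0
      · by_cases hxy : x = y
        · subst hxy; exact r₀.refl x
        · have := h y x h0 (fun e => hxy e.symm)
          exact absurd (r₁.antisymm _ _ h1 this) hxy
  obtain ⟨v, u, hvu, hvune, hadj, hr1⟩ := exists_adjacent r₀ r₁ hex
  -- r₁ reverses the pair
  have h1uv : r₁.le u v := (r₁.total v u).resolve_left hr1
  have huvne : u ≠ v := fun e => hvune e.symm
  -- u.1.1 < v.1.1
  have hidx : u.1.1 < v.1.1 := by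
    rcases lt_trichotomy v.1.1 u.1.1 with h | h | h
    · exact absurd (hdom v u h hvu) hr1
    · rcases le_total v.1.2 u.1.2 with hk | hk
      · exact absurd (r₁.compat v u h hk) hr1
      · exact absurd (r₀.antisymm _ _ (r₀.compat u v h.symm hk) hvu).symm hvune
    · exact h
  -- not r₀.le u v
  have h0uv : ¬ r₀.le u v := fun h => hvune (r₀.antisymm _ _ hvu h)
  -- every z is ≤ v or ≥ u in r₀
  have hsplit : ∀ z, r₀.le z v ∨ r₀.le u z := by
    intro z
    rcases r₀.total z v with h | h
    · exact Or.inl h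
    · rcases r₀.total z u with h' | h'
      · rcases hadj z h h' with e | e
        · subst e; exact Or.inl (r₀.refl z)
        · subst e; exact Or.inr (r₀.refl z)
      · exact Or.inr h'
  refine ⟨u, v, hidx, ⟨hvu, hvune, hadj⟩, h1uv, ?_⟩
  refine ⟨⟨transposeLe r₀ u v, ?_, ?_, ?_, ?_, ?_⟩, rfl, ?_, ?_⟩
  · -- refl
    intro x
    exact Or.inr ⟨fun ⟨e1, e2⟩ => huvne (e2.symm.trans e1), r₀.refl x⟩
  · -- trans
    rintro x y z (⟨hx, hy⟩ | ⟨hxy, h0⟩) hyz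
    · rcases hyz with ⟨e1, _⟩ | ⟨hnz, h0'⟩
      · exact absurd (e1.symm.trans hy) huvne
      · -- y = v, r₀.le y z
        rw [hy] at h0'
        by_cases hz : z = v
        · exact Or.inl ⟨hx, hz⟩
        · refine Or.inr ⟨fun ⟨e1, _⟩ => huvne (hx.symm.trans e1), ?_⟩
          rw [hx]
          rcases hsplit z with h | h
          · exact absurd (r₀.antisymm _ _ h0' h).symm hz
          · exact h
    · rcases hyz with ⟨hy, hz⟩ | ⟨hnyz, h0'⟩
      · rw [hy] at h0
        rw [hz]
        by_cases hx : x = u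
        · exact Or.inl ⟨hx, rfl⟩
        · refine Or.inr ⟨fun ⟨_, e2⟩ => huvne e2.symm, ?_⟩
          rcases hsplit x with h | h
          · exact h
          · exact absurd (r₀.antisymm _ _ h0 h) hx
      · refine Or.inr ⟨?_, r₀.trans _ _ _ h0 h0'⟩
        rintro ⟨hx, hz⟩
        rw [hx] at h0
        rw [hz] at h0'
        rcases hadj y h0 h0' with e | e
        · exact hnyz ⟨e, hz⟩
        · exact hxy ⟨hx, e⟩
  · -- antisymm
    rintro x y (⟨hx, hy⟩ | ⟨hnxy, h0⟩) (⟨hy', hx'⟩ | ⟨hnyx, h0'⟩)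
    · exact absurd (hx.symm.trans hx') huvne
    · exact absurd ⟨hy, hx⟩ hnyx
    · exact absurd ⟨hx', hy'⟩ hnxy
    · exact r₀.antisymm _ _ h0 h0'
  · -- total
    intro x y
    by_cases hxy : x = u ∧ y = v
    · exact Or.inl (Or.inl hxy)
    · by_cases hyx : y = u ∧ x = v
      · exact Or.inr (Or.inl hyx)
      · rcases r₀.total x y with h | h
        · exact Or.inl (Or.inr ⟨fun ⟨e1, e2⟩ => hyx ⟨e2, e1⟩, h⟩)
        · exact Or.inr (Or.inr ⟨fun ⟨e1, e2⟩ => hxy ⟨e2, e1⟩, h⟩)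
  · -- compat
    intro x y hi hk
    refine Or.inr ⟨?_, r₀.compat x y hi hk⟩
    rintro ⟨hx, hy⟩
    rw [hx, hy] at hi
    exact absurd hi (ne_of_gt hidx)
  · -- Dominates r₀ r'
    intro x y hilt h0
    refine Or.inr ⟨?_, h0⟩
    rintro ⟨hx, hy⟩
    rw [hx, hy] at hilt
    exact absurd hilt (not_lt.mpr (le_of_lt hidx))
  · -- Dominates r' r₁
    rintro x y hilt (⟨hx, hy⟩ | ⟨-, h0⟩)
    · rw [hx, hy]; exact h1uv
    · exact hdom x y hilt h0

end GrayShuffle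
end

section
/- Let ⪯₀ ⊴ ⪯₁ ⊴ ⋯ ⊴ ⪯_q be a chain of shuffles on S(s,t) (q ≥ 0), and let x be a cut-point for the pair (⪯₀, ⪯_q). Then for every 0 ≤ p ≤ q, every (i|k) ∈ S(s,x) and every (j|ℓ) ∈ S(x,t), one has (i|k) ⪯_p (j|ℓ); in particular, x is a cut-point for every pair (⪯_p, ⪯_{p′}) with 0 ≤ p, p′ ≤ q. -/
/-!
Shuffles on `S(s,t)`.  Fix `a ≥ 1` and tuples `s, t ∈ ℕᵃ` with `sᵢ ≤ tᵢ`.  We let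
`S(s,t) = {(i|k) : 1 ≤ i ≤ a, sᵢ < k ≤ tᵢ}` (with indices `i` modelled by `Fin a`),
a *shuffle* on `S(s,t)` is a total order `⪯` such that `(i|k) ⪯ (i|ℓ)` whenever
`k ≤ ℓ`, and `⪯ ⊴ ⪯′` means that `(i|k) ⪯ (j|ℓ)` implies `(i|k) ⪯′ (j|ℓ)` whenever
`i < j`.
-/

namespace GrayShuffle

variable {a : ℕ} {s t : Fin a → ℕ}

/-- `x` is a cut-point for the pair of shuffles `(r, r')`: `sᵢ ≤ xᵢ ≤ tᵢ` for all `i`,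
`s ≠ x ≠ t`, and `(i|k) ⪯ (j|ℓ)` as well as `(i|k) ⪯′ (j|ℓ)` for all
`(i|k) ∈ S(s,x)` and `(j|ℓ) ∈ S(x,t)`. -/
def IsCutPoint (r r' : Shuffle a s t) (x : Fin a → ℕ) : Prop :=
  (∀ i, s i ≤ x i ∧ x i ≤ t i) ∧ s ≠ x ∧ x ≠ t ∧
    ∀ u v : Idx a s t, u.1.2 ≤ x u.1.1 → x v.1.1 < v.1.2 → r.le u v ∧ r'.le u v

lemma dominates_of_le {a : ℕ} {s t : Fin a → ℕ} {q : ℕ} (r : Fin (q + 1) → Shuffle a s t)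
    (hchain : ∀ p : Fin q, Dominates (r p.castSucc) (r p.succ)) :
    ∀ n m : Fin (q + 1), m ≤ n → Dominates (r m) (r n) := by
  intro n
  induction n using Fin.induction with
  | zero =>
    intro m hm
    have : m = 0 := le_antisymm hm (Fin.zero_le m)
    subst this; intro u v _ h; exact h
  | succ p ih =>
    intro m hm
    rcases eq_or_lt_of_le hm with h | h
    · subst h; intro u v _ hle; exact hle
    · have hm' : m ≤ p.castSucc := by
        have := Fin.lt_def.mp h
        exact Fin.le_def.mpr (Nat.lt_succ_iff.mp (by simpa using this))
      intro u v hlt hle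
      exact hchain p u v hlt (ih m hm' u v hlt hle)

/-- Let `⪯₀ ⊴ ⪯₁ ⊴ ⋯ ⊴ ⪯_q` be a chain of shuffles on `S(s,t)` and
let `x` be a cut-point for the pair `(⪯₀, ⪯_q)`.  Then for every `0 ≤ p ≤ q`, every
`(i|k) ∈ S(s,x)` and every `(j|ℓ) ∈ S(x,t)` one has `(i|k) ⪯_p (j|ℓ)`; in particular
`x` is a cut-point for every pair `(⪯_p, ⪯_{p′})` with `0 ≤ p, p′ ≤ q`. -/
theorem statement5 (a : ℕ) (ha : 1 ≤ a) (s t : Fin a → ℕ) (hst : ∀ i, s i ≤ t i)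
    (q : ℕ) (r : Fin (q + 1) → Shuffle a s t)
    (hchain : ∀ p : Fin q, Dominates (r p.castSucc) (r p.succ))
    (x : Fin a → ℕ) (hx : IsCutPoint (r 0) (r (Fin.last q)) x) :
    (∀ (p : Fin (q + 1)) (u v : Idx a s t),
        u.1.2 ≤ x u.1.1 → x v.1.1 < v.1.2 → (r p).le u v) ∧
      ∀ p p' : Fin (q + 1), IsCutPoint (r p) (r p') x := by
  obtain ⟨h1, h2, h3, h4⟩ := hx
  have key : ∀ (p : Fin (q + 1)) (u v : Idx a s t),
      u.1.2 ≤ x u.1.1 → x v.1.1 < v.1.2 → (r p).le u v := by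
    intro p u v hu hv
    obtain ⟨h0, hq⟩ := h4 u v hu hv
    rcases lt_trichotomy u.1.1 v.1.1 with hlt | heq | hgt
    · exact dominates_of_le r hchain p 0 (Fin.zero_le p) u v hlt h0
    · exact (r p).compat u v heq (le_of_lt (lt_of_le_of_lt (heq ▸ hu) hv))
    · by_contra hcon
      have hvu : (r p).le v u := ((r p).total u v).resolve_left hcon
      have hvu' : (r (Fin.last q)).le v u :=
        dominates_of_le r hchain (Fin.last q) p (Fin.le_last p) v u hgt hvu
      have : u = v := (r (Fin.last q)).antisymm u v hq hvu'
      exact absurd (this ▸ hgt) (lt_irrefl _)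
  exact ⟨key, fun p p' => ⟨h1, h2, h3, fun u v hu hv => ⟨key p u v hu hv, key p' u v hu hv⟩⟩⟩


end GrayShuffle
end

section
/- Let ⪯₀ ⊴ ⪯₁ be shuffles on S(s,t) such that the pair (s,t) is non-linear and the pair (⪯₀, ⪯₁) admits a cut-point. Then (⪯₀, ⪯₁) admits a right-angled cut-point. -/
/-!
Shuffles on `S(s,t)`.  Fix `a ≥ 1` and tuples `s, t ∈ ℕᵃ` with `sᵢ ≤ tᵢ`.  We let
`S(s,t) = {(i|k) : 1 ≤ i ≤ a, sᵢ < k ≤ tᵢ}` (with indices `i` modelled by `Fin a`),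
a *shuffle* on `S(s,t)` is a total order `⪯` such that `(i|k) ⪯ (i|ℓ)` whenever
`k ≤ ℓ`, and `⪯ ⊴ ⪯′` means that `(i|k) ⪯ (j|ℓ)` implies `(i|k) ⪯′ (j|ℓ)` whenever
`i < j`.
-/

namespace GrayShuffle

variable {a : ℕ} {s t : Fin a → ℕ}

/-- A cut-point `x` for `(r, r')` is *right-angled* if for every `i` with
`sᵢ < xᵢ < tᵢ`, either `(i|xᵢ+1)` is not the immediate `r`-successor of `(i|xᵢ)`, or
`(i|xᵢ+1)` is not the immediate `r'`-successor of `(i|xᵢ)`. -/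
def IsRightAngledCutPoint (r r' : Shuffle a s t) (x : Fin a → ℕ) : Prop :=
  IsCutPoint r r' x ∧
    ∀ (i : Fin a) (h1 : s i < x i) (h2 : x i < t i),
      ¬ ImmediateSucc r ⟨(i, x i), h1, le_of_lt h2⟩
          ⟨(i, x i + 1), Nat.lt_succ_of_lt h1, h2⟩ ∨
      ¬ ImmediateSucc r' ⟨(i, x i), h1, le_of_lt h2⟩
          ⟨(i, x i + 1), Nat.lt_succ_of_lt h1, h2⟩

/-- The pair `(s,t)` is non-linear: `sᵢ < tᵢ` for at least two distinct indices. -/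
def NonLinear (s t : Fin a → ℕ) : Prop :=
  ∃ i j : Fin a, i ≠ j ∧ s i < t i ∧ s j < t j

/-- helper: if e' is immediate successor of e and e ≤ v with v ∉ {e,e'} then e' ≤ v -/
lemma succ_le (r : Shuffle a s t) {e e' v : Idx a s t} (h : ImmediateSucc r e e')
    (hev : r.le e v) (h1 : v ≠ e) (h2 : v ≠ e') : r.le e' v := by
  rcases r.total e' v with h' | h'
  · exact h'
  · rcases h.2.2 v hev h' with h'' | h''
    · exact absurd h'' h1
    · exact absurd h'' h2

lemma le_pred (r : Shuffle a s t) {e e' u : Idx a s t} (h : ImmediateSucc r e e')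
    (hue : r.le u e') (h1 : u ≠ e) (h2 : u ≠ e') : r.le u e := by
  rcases r.total u e with h' | h'
  · exact h'
  · rcases h.2.2 u h' hue with h'' | h''
    · exact absurd h'' h1
    · exact absurd h'' h2

/-- separation property of a cut-point (without the `s ≠ x ≠ t` conditions) -/
def Sep (r r' : Shuffle a s t) (x : Fin a → ℕ) : Prop :=
  (∀ i, s i ≤ x i ∧ x i ≤ t i) ∧
    ∀ u v : Idx a s t, u.1.2 ≤ x u.1.1 → x v.1.1 < v.1.2 → r.le u v ∧ r'.le u v

/-- index `i` is "bad" at value `c`: interior and immediate succ in both orders -/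
def BadAt (r r' : Shuffle a s t) (i : Fin a) (c : ℕ) : Prop :=
  ∃ (h1 : s i < c) (h2 : c < t i),
    ImmediateSucc r ⟨(i, c), h1, le_of_lt h2⟩ ⟨(i, c + 1), Nat.lt_succ_of_lt h1, h2⟩ ∧
    ImmediateSucc r' ⟨(i, c), h1, le_of_lt h2⟩ ⟨(i, c + 1), Nat.lt_succ_of_lt h1, h2⟩

lemma sep_pushUp (r r' : Shuffle a s t) (x : Fin a → ℕ) (i : Fin a)
    (hs : Sep r r' x) (hb : BadAt r r' i (x i)) :
    Sep r r' (Function.update x i (x i + 1)) := by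
  obtain ⟨hbnd, hsep⟩ := hs
  obtain ⟨h1, h2, hb0, hb1⟩ := hb
  have hxle : ∀ j, x j ≤ Function.update x i (x i + 1) j := by
    intro j; rcases eq_or_ne j i with rfl | hj
    · rw [Function.update_self]; omega
    · rw [Function.update_of_ne hj]
  refine ⟨fun j => ?_, fun u v hu hv => ?_⟩
  · rcases eq_or_ne j i with rfl | hj
    · have := (hbnd j).1
      rw [Function.update_self]; omega
    · rw [Function.update_of_ne hj]; exact hbnd j
  · have hv' : x v.1.1 < v.1.2 := lt_of_le_of_lt (hxle v.1.1) hv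
    by_cases hu' : u.1.2 ≤ x u.1.1
    · exact hsep u v hu' hv'
    · have hui : u.1.1 = i := by
        by_contra h; rw [Function.update_of_ne h] at hu; exact hu' hu
      rw [hui, Function.update_self] at hu
      have hu2 : u.1.2 = x i + 1 := by rw [hui] at hu'; omega
      have e1 : s i < x i := h1
      set e : Idx a s t := ⟨(i, x i), h1, le_of_lt h2⟩ with he_def
      set e' : Idx a s t := ⟨(i, x i + 1), Nat.lt_succ_of_lt h1, h2⟩ with he'_def
      have hue : u = e' := Subtype.ext (by rw [Prod.ext_iff]; exact ⟨hui, hu2⟩)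
      have hvne : v ≠ e := by
        intro hveq; rw [hveq] at hv
        simp only [he_def, Function.update_self] at hv; omega
      have hvne' : v ≠ e' := by
        intro hveq; rw [hveq] at hv
        simp only [he'_def, Function.update_self] at hv; omega
      have heq : r.le e v ∧ r'.le e v := hsep e v (le_refl (x i)) hv'
      rw [hue]
      exact ⟨succ_le r hb0 heq.1 hvne hvne', succ_le r' hb1 heq.2 hvne hvne'⟩

lemma sep_pushDown (r r' : Shuffle a s t) (x : Fin a → ℕ) (i : Fin a)
    (hs : Sep r r' x) (hb : BadAt r r' i (x i)) :
    Sep r r' (Function.update x i (x i - 1)) := by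
  obtain ⟨hbnd, hsep⟩ := hs
  obtain ⟨h1, h2, hb0, hb1⟩ := hb
  have hxge : ∀ j, Function.update x i (x i - 1) j ≤ x j := by
    intro j; rcases eq_or_ne j i with rfl | hj
    · rw [Function.update_self]; omega
    · rw [Function.update_of_ne hj]
  refine ⟨fun j => ?_, fun u v hu hv => ?_⟩
  · rcases eq_or_ne j i with rfl | hj
    · have := (hbnd j).2
      rw [Function.update_self]; omega
    · rw [Function.update_of_ne hj]; exact hbnd j
  · have hu' : u.1.2 ≤ x u.1.1 := le_trans hu (hxge u.1.1)
    by_cases hv' : x v.1.1 < v.1.2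
    · exact hsep u v hu' hv'
    · have hvi : v.1.1 = i := by
        by_contra h; rw [Function.update_of_ne h] at hv; exact hv' hv
      rw [hvi, Function.update_self] at hv
      have hv2 : v.1.2 = x i := by rw [hvi] at hv'; omega
      set e : Idx a s t := ⟨(i, x i), h1, le_of_lt h2⟩ with he_def
      set e' : Idx a s t := ⟨(i, x i + 1), Nat.lt_succ_of_lt h1, h2⟩ with he'_def
      have hve : v = e := Subtype.ext (by rw [Prod.ext_iff]; exact ⟨hvi, hv2⟩)
      have hune : u ≠ e := by
        intro hueq; rw [hueq] at hu
        simp only [he_def, Function.update_self] at hu; omega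
      have hune' : u ≠ e' := by
        intro hueq; rw [hueq] at hu
        simp only [he'_def, Function.update_self] at hu; omega
      have heq : r.le u e' ∧ r'.le u e' := hsep u e' hu' (Nat.lt_succ_self (x i))
      rw [hve]
      exact ⟨le_pred r hb0 heq.1 hune hune', le_pred r' hb1 heq.2 hune hune'⟩
lemma fixUpAux (r r' : Shuffle a s t) (i : Fin a) :
    ∀ (n : ℕ) (x : Fin a → ℕ), t i - x i ≤ n → Sep r r' x →
      ∃ y, Sep r r' y ∧ (∀ j, j ≠ i → y j = x j) ∧ x i ≤ y i ∧
        ¬ BadAt r r' i (y i) ∧ (¬ BadAt r r' i (x i) → y = x) := by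
  intro n
  induction n with
  | zero =>
    intro x hn hsep
    refine ⟨x, hsep, fun j _ => rfl, le_refl _, ?_, fun _ => rfl⟩
    rintro ⟨h1, h2, -⟩; omega
  | succ n ih =>
    intro x hn hsep
    by_cases hb : BadAt r r' i (x i)
    · obtain ⟨h1, h2, -⟩ := id hb
      obtain ⟨y, hy1, hy2, hy3, hy4, -⟩ :=
        ih (Function.update x i (x i + 1))
          (by rw [Function.update_self]; omega) (sep_pushUp r r' x i hsep hb)
      refine ⟨y, hy1, fun j hj => (hy2 j hj).trans (Function.update_of_ne hj _ _), ?_, hy4,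
        fun h => absurd hb h⟩
      rw [Function.update_self] at hy3; omega
    · exact ⟨x, hsep, fun j _ => rfl, le_refl _, hb, fun _ => rfl⟩

lemma fixDownAux (r r' : Shuffle a s t) (i : Fin a) :
    ∀ (n : ℕ) (x : Fin a → ℕ), x i - s i ≤ n → Sep r r' x →
      ∃ y, Sep r r' y ∧ (∀ j, j ≠ i → y j = x j) ∧ y i ≤ x i ∧
        ¬ BadAt r r' i (y i) := by
  intro n
  induction n with
  | zero =>
    intro x hn hsep
    refine ⟨x, hsep, fun j _ => rfl, le_refl _, ?_⟩
    rintro ⟨h1, h2, -⟩; omega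
  | succ n ih =>
    intro x hn hsep
    by_cases hb : BadAt r r' i (x i)
    · obtain ⟨h1, h2, -⟩ := id hb
      obtain ⟨y, hy1, hy2, hy3, hy4⟩ :=
        ih (Function.update x i (x i - 1))
          (by rw [Function.update_self]; omega) (sep_pushDown r r' x i hsep hb)
      refine ⟨y, hy1, fun j hj => (hy2 j hj).trans (Function.update_of_ne hj _ _), ?_, hy4⟩
      rw [Function.update_self] at hy3; omega
    · exact ⟨x, hsep, fun j _ => rfl, le_refl _, hb⟩

lemma fixUpList (r r' : Shuffle a s t) :
    ∀ (L : List (Fin a)) (x : Fin a → ℕ), Sep r r' x →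
      ∃ y, Sep r r' y ∧ (∀ j, x j ≤ y j) ∧
        (∀ j ∈ L, ¬ BadAt r r' j (y j)) ∧
        (∀ j, ¬ BadAt r r' j (x j) → y j = x j) := by
  intro L
  induction L with
  | nil => intro x hsep; exact ⟨x, hsep, fun j => le_refl _, fun j hj => absurd hj (by simp),
      fun j _ => rfl⟩
  | cons i L ih =>
    intro x hsep
    obtain ⟨x₁, hx1, hx2, hx3, hx4, hx5⟩ := fixUpAux r r' i (t i - x i) x le_rfl hsep
    obtain ⟨y, hy1, hy2, hy3, hy4⟩ := ih x₁ hx1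
    have hyi : y i = x₁ i := hy4 i hx4
    refine ⟨y, hy1, ?_, ?_, ?_⟩
    · intro j; rcases eq_or_ne j i with rfl | hj
      · omega
      · rw [← hx2 j hj]; exact hy2 j
    · intro j hj
      rcases eq_or_ne j i with rfl | hj'
      · rw [hyi]; exact hx4
      · exact hy3 j (by simpa [hj'] using hj)
    · intro j hgood
      rcases eq_or_ne j i with rfl | hj
      · rw [hyi, hx5 hgood]
      · have : x₁ j = x j := hx2 j hj
        rw [hy4 j (this ▸ hgood), this]

lemma badConvert (r r' : Shuffle a s t) (x : Fin a → ℕ) (h : ∀ j, ¬ BadAt r r' j (x j)) :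
    ∀ (i : Fin a) (h1 : s i < x i) (h2 : x i < t i),
      ¬ ImmediateSucc r ⟨(i, x i), h1, le_of_lt h2⟩
          ⟨(i, x i + 1), Nat.lt_succ_of_lt h1, h2⟩ ∨
      ¬ ImmediateSucc r' ⟨(i, x i), h1, le_of_lt h2⟩
          ⟨(i, x i + 1), Nat.lt_succ_of_lt h1, h2⟩ := by
  intro i h1 h2
  by_cases hA : ImmediateSucc r ⟨(i, x i), h1, le_of_lt h2⟩
      ⟨(i, x i + 1), Nat.lt_succ_of_lt h1, h2⟩
  · right; intro hB; exact h i ⟨h1, h2, hA, hB⟩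
  · left; exact hA

theorem statement6' (a : ℕ) (ha : 1 ≤ a) (s t : Fin a → ℕ) (hst : ∀ i, s i ≤ t i)
    (r₀ r₁ : Shuffle a s t)
    (hnl : NonLinear s t) (hcut : ∃ x, IsCutPoint r₀ r₁ x) :
    ∃ x, IsRightAngledCutPoint r₀ r₁ x := by
  obtain ⟨x₀, hbnd₀, hsx, hxt, hsep₀⟩ := hcut
  have S0 : Sep r₀ r₁ x₀ := ⟨hbnd₀, hsep₀⟩
  have hjt : ∃ j, x₀ j < t j := by
    by_contra h; push_neg at h
    exact hxt (funext fun j => le_antisymm (hbnd₀ j).2 (h j))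
  obtain ⟨js, hjs⟩ := hjt
  obtain ⟨x₁, S1, hx1eq, hx1le, hx1good⟩ := fixDownAux r₀ r₁ js (x₀ js - s js) x₀ le_rfl S0
  obtain ⟨w, Sw, hwge, hwgood, hwkeep⟩ := fixUpList r₀ r₁ (List.finRange a) x₁ S1
  have hwall : ∀ j, ¬ BadAt r₀ r₁ j (w j) := fun j => hwgood j (List.mem_finRange j)
  have hwjs : w js = x₁ js := hwkeep js hx1good
  have hwt : w ≠ t := by
    intro h; have h' := congrFun h js; omega
  by_cases hsw : s = w
  · have hxs : ∀ j, j ≠ js → x₀ j = s j := by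
      intro j hj
      have h1 := hwge j
      have h2 := hx1eq j hj
      have h3 := congrFun hsw j
      have h4 := (hbnd₀ j).1
      omega
    have hjs2 : s js < x₀ js := by
      by_contra h
      apply hsx; funext j
      rcases eq_or_ne j js with rfl | hj
      · have := (hbnd₀ j).1; omega
      · exact (hxs j hj).symm
    obtain ⟨z, Sz, hzeq, hzle, hzgood, -⟩ := fixUpAux r₀ r₁ js (t js - x₀ js) x₀ le_rfl S0
    have hzall : ∀ j, ¬ BadAt r₀ r₁ j (z j) := by
      intro j
      rcases eq_or_ne j js with rfl | hj
      · exact hzgood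
      · rw [hzeq j hj, hxs j hj]
        rintro ⟨h1, -⟩; omega
    obtain ⟨i0, j0, hij, hi0, hj0⟩ := hnl
    obtain ⟨k, hkjs, hkst⟩ : ∃ k, k ≠ js ∧ s k < t k := by
      rcases eq_or_ne i0 js with rfl | h
      · exact ⟨j0, fun hh => hij hh.symm, hj0⟩
      · exact ⟨i0, h, hi0⟩
    refine ⟨z, ⟨⟨Sz.1, ?_, ?_, Sz.2⟩, badConvert r₀ r₁ z hzall⟩⟩
    · intro h; have h' := congrFun h js; omega
    · intro h; have h' := congrFun h k; rw [hzeq k hkjs, hxs k hkjs] at h'; omega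
  · exact ⟨w, ⟨⟨Sw.1, hsw, hwt, Sw.2⟩, badConvert r₀ r₁ w hwall⟩⟩


/-- Let `⪯₀ ⊴ ⪯₁` be shuffles on `S(s,t)` such that the pair `(s,t)`
is non-linear and the pair `(⪯₀, ⪯₁)` admits a cut-point.  Then `(⪯₀, ⪯₁)` admits a
right-angled cut-point. -/
theorem statement6 (a : ℕ) (ha : 1 ≤ a) (s t : Fin a → ℕ) (hst : ∀ i, s i ≤ t i)
    (r₀ r₁ : Shuffle a s t) (hdom : Dominates r₀ r₁)
    (hnl : NonLinear s t) (hcut : ∃ x, IsCutPoint r₀ r₁ x) :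
    ∃ x, IsRightAngledCutPoint r₀ r₁ x :=
  statement6' a ha s t hst r₀ r₁ hnl hcut

end GrayShuffle
end
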